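/- Let Γ be a ℤ^d-periodic graph with fundamental domain W = [n], and let w ∈ ℤ^{d+1} be such that F = N_w ⊂ ℝ^{d+1} is a proper vertical face of the generic Newton polytope N = N(D(z,λ)). Then there exists i ∈ [n] such that the facial polynomial D_w(z,λ) is independent of the potential variable v_i. -/

import Mathlib

open scoped Classical Polynomial

noncomputable section

/-- A `ℤ^d`-periodic graph (with no self-loops or multiple edges), given by a
fundamental domain `[n] = Fin n` together with, for each pair `i j` of vertices
of the fundamental domain, the finite set `edges i j ⊆ ℤ^d` of those `a` such
that there is an edge between the vertex `(i,0)` and the vertex `(j,a)`.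
The full vertex set is `Fin n × ℤ^d`, with `ℤ^d` acting by translation on the
second coordinate. -/
structure PeriodicGraph (d n : ℕ) where
  edges : Fin n → Fin n → Finset (Fin d → ℤ)
  symm : ∀ i j a, a ∈ edges i j ↔ -a ∈ edges j i
  no_loop : ∀ i, (0 : Fin d → ℤ) ∉ edges i i

namespace PeriodicGraph

variable {d n : ℕ}

/-- Vertices of the periodic graph: pairs `(i, a)` with `i` in the fundamental
domain and `a ∈ ℤ^d`. -/
abbrev Vertex (d n : ℕ) := Fin n × (Fin d → ℤ)

/-- Adjacency in the full `ℤ^d`-periodic graph. -/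
def Adj (G : PeriodicGraph d n) (u v : Vertex d n) : Prop :=
  (v.2 - u.2) ∈ G.edges u.1 v.1

/-- The periodic graph is connected. -/
def Connected (G : PeriodicGraph d n) : Prop :=
  ∀ u v : Vertex d n, Relation.ReflTransGen G.Adj u v

/-- Directed edges (up to translation): triples `(i, j, a)` so that there is an
edge from `(i,0)` to `(j,a)`. -/
def DirEdge (G : PeriodicGraph d n) : Type :=
  {x : Fin n × Fin n × (Fin d → ℤ) // x.2.2 ∈ G.edges x.1 x.2.1}

/-- Reversal of a directed edge. -/
def flipEdge (G : PeriodicGraph d n) (x : G.DirEdge) : G.DirEdge :=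
  ⟨(x.1.2.1, x.1.1, -x.1.2.2), (G.symm _ _ _).mp x.2⟩

lemma flipEdge_flipEdge (G : PeriodicGraph d n) (x : G.DirEdge) :
    G.flipEdge (G.flipEdge x) = x := by
  obtain ⟨⟨i, j, a⟩, hx⟩ := x
  simp [flipEdge] <;> rfl

/-- The setoid identifying a directed edge with its reversal; an (undirected)
edge label variable `e_{(i,j),a} = e_{(j,i),-a}` corresponds to an equivalence
class. -/
def edgeSetoid (G : PeriodicGraph d n) : Setoid G.DirEdge where
  r x y := y = x ∨ y = G.flipEdge x
  iseqv := by
    constructor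
    · intro x; exact Or.inl rfl
    · rintro x y (rfl | rfl)
      · exact Or.inl rfl
      · right; rw [flipEdge_flipEdge]
    · rintro x y z (rfl | rfl) h
      · exact h
      · rcases h with rfl | rfl
        · exact Or.inr rfl
        · left; rw [flipEdge_flipEdge]

/-- Edge-label variables: unordered edges of the quotient graph. -/
abbrev EdgeVar (G : PeriodicGraph d n) : Type := Quotient G.edgeSetoid

/-- The index type for the variables of the labeling space `ℂ^{V,E}`:
one potential variable `v_i` for each vertex `i` of the fundamental domain,
and one edge-label variable for each (undirected) edge of the quotient. -/
abbrev VarIdx (G : PeriodicGraph d n) : Type := Fin n ⊕ G.EdgeVar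

/-- The labeling space `ℂ^{V,E}`. -/
abbrev Labeling (G : PeriodicGraph d n) : Type := G.VarIdx → ℂ

/-- The edge variable attached to a directed edge. -/
def edgeVar (G : PeriodicGraph d n) (i j : Fin n) (a : Fin d → ℤ)
    (h : a ∈ G.edges i j) : G.VarIdx :=
  Sum.inr (Quotient.mk G.edgeSetoid ⟨(i, j, a), h⟩)

/-- The ring `ℂ[z^{±1}]` of complex Laurent polynomials in `z = (z_1,…,z_d)`. -/
abbrev LaurentC (d : ℕ) : Type := AddMonoidAlgebra ℂ (Fin d → ℤ)

/-- The universal coefficient ring `ℂ[v,e]`: polynomials in the potential and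
edge-label variables. -/
abbrev CoeffRing (G : PeriodicGraph d n) : Type := MvPolynomial G.VarIdx ℂ

/-- Laurent polynomials in `z` with coefficients in `ℂ[v,e]`. -/
abbrev LaurentU (G : PeriodicGraph d n) : Type :=
  AddMonoidAlgebra G.CoeffRing (Fin d → ℤ)

/-- The Floquet matrix `L(z)` at a fixed labeling `x ∈ ℂ^{V,E}`:
`L(z)_{i,j} = δ_{ij} v_i + ∑_{a : (i,j+a) ∈ ℰ} e_{(i,j),a} z^a`. -/
def floquet (G : PeriodicGraph d n) (x : G.Labeling) :
    Matrix (Fin n) (Fin n) (LaurentC d) := fun i j =>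
  (if i = j then AddMonoidAlgebra.single 0 (x (Sum.inl i)) else 0) +
    ∑ a ∈ (G.edges i j).attach,
      AddMonoidAlgebra.single a.1 (x (G.edgeVar i j a.1 a.2))

/-- The universal Floquet matrix `L(z)`, with the potentials and edge labels
treated as indeterminates. -/
def floquetU (G : PeriodicGraph d n) :
    Matrix (Fin n) (Fin n) G.LaurentU := fun i j =>
  (if i = j then AddMonoidAlgebra.single 0 (MvPolynomial.X (Sum.inl i)) else 0) +
    ∑ a ∈ (G.edges i j).attach,
      AddMonoidAlgebra.single a.1 (MvPolynomial.X (G.edgeVar i j a.1 a.2))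

/-- The matrix `L(z) - λ I` at a fixed labeling, as a matrix of polynomials in
`λ` over `ℂ[z^{±1}]`. -/
def dispMat (G : PeriodicGraph d n) (x : G.Labeling) :
    Matrix (Fin n) (Fin n) (Polynomial (LaurentC d)) := fun i j =>
  Polynomial.C (G.floquet x i j) - if i = j then Polynomial.X else 0

/-- The universal matrix `L(z) - λ I`. -/
def dispMatU (G : PeriodicGraph d n) :
    Matrix (Fin n) (Fin n) (Polynomial G.LaurentU) := fun i j =>
  Polynomial.C (G.floquetU i j) - if i = j then Polynomial.X else 0

/-- The dispersion polynomial `D(z,λ) = det (L(z) - λ I)` at a fixed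
labeling, an element of `ℂ[z^{±1}][λ]`. -/
def disp (G : PeriodicGraph d n) (x : G.Labeling) : Polynomial (LaurentC d) :=
  (G.dispMat x).det

/-- The universal dispersion polynomial `D(v,e,z,λ) = det (L(z) - λ I)`,
an element of `ℂ[v,e][z^{±1}][λ]`. -/
def dispU (G : PeriodicGraph d n) : Polynomial G.LaurentU :=
  G.dispMatU.det

/-- `σD(z,λ) = ∏ i, (L(z) - λI)_{i, σ(i)}` at a fixed labeling. -/
def permProd (G : PeriodicGraph d n) (x : G.Labeling) (σ : Equiv.Perm (Fin n)) :
    Polynomial (LaurentC d) :=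
  ∏ i, G.dispMat x i (σ i)

/-- The universal `σD(v,e,z,λ) = ∏ i, (L(z) - λI)_{i, σ(i)}`. -/
def permProdU (G : PeriodicGraph d n) (σ : Equiv.Perm (Fin n)) :
    Polynomial G.LaurentU :=
  ∏ i, G.dispMatU i (σ i)

/-- The support `𝒜(g) ⊆ ℤ^d × ℕ` of `g ∈ ℂ[z^{±1}][λ]`: the set of pairs
`(a, b)` such that the monomial `z^a λ^b` has nonzero coefficient. -/
def suppC (g : Polynomial (LaurentC d)) : Set ((Fin d → ℤ) × ℕ) :=
  {p | (g.coeff p.2).coeff p.1 ≠ 0}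

/-- The generic support `A(f) ⊆ ℤ^d × ℕ` of `f ∈ ℂ[v,e][z^{±1}][λ]`: the set
of `(a,b)` such that the coefficient `c_{a,b}(v,e)` of `z^a λ^b` is a nonzero
polynomial in `(v,e)` (equivalently, such that `(a,b)` is in the support of the
specialization of `f` at a generic labeling). -/
def genSupp {G : PeriodicGraph d n} (f : Polynomial G.LaurentU) :
    Set ((Fin d → ℤ) × ℕ) :=
  {p | (f.coeff p.2).coeff p.1 ≠ 0}

/-- The full support `𝒜(f) ⊆ ℤ^d × ℕ × ℕ^{V,E}` of `f ∈ ℂ[v,e][z^{±1}][λ]`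
as a polynomial in all the variables `z, λ, v, e`: the set of triples
`(r₁, r₂, r₃)` such that the monomial `z^{r₁} λ^{r₂} (v,e)^{r₃}` appears in `f`
with nonzero coefficient. -/
def fullSupp {G : PeriodicGraph d n} (f : Polynomial G.LaurentU) :
    Set ((Fin d → ℤ) × ℕ × (G.VarIdx →₀ ℕ)) :=
  {r | MvPolynomial.coeff r.2.2 ((f.coeff r.2.1).coeff r.1) ≠ 0}

/-- The embedding `ℤ^d × ℕ → ℝ^{d+1}` of exponent vectors. -/
def toPt (p : (Fin d → ℤ) × ℕ) : (Fin d → ℝ) × ℝ :=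
  (fun i => (p.1 i : ℝ), (p.2 : ℝ))

/-- The generic Newton polytope `N(f) ⊆ ℝ^{d+1}` of `f ∈ ℂ[v,e][z^{±1}][λ]`:
the convex hull of the generic support. -/
def newton {G : PeriodicGraph d n} (f : Polynomial G.LaurentU) :
    Set ((Fin d → ℝ) × ℝ) :=
  convexHull ℝ (toPt '' genSupp f)

/-- The pairing `w · p` of a weight `w ∈ ℤ^{d+1}` with an exponent vector
`p ∈ ℤ^d × ℕ`. -/
def dotZ (w : (Fin d → ℤ) × ℤ) (p : (Fin d → ℤ) × ℕ) : ℤ :=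
  (∑ i, w.1 i * p.1 i) + w.2 * (p.2 : ℤ)

/-- The pairing `w · q` of a weight `w ∈ ℤ^{d+1}` with a point `q ∈ ℝ^{d+1}`. -/
def dotR (w : (Fin d → ℤ) × ℤ) (q : (Fin d → ℝ) × ℝ) : ℝ :=
  (∑ i, (w.1 i : ℝ) * q.1 i) + (w.2 : ℝ) * q.2

/-- The face `N(f)_w` of the generic Newton polytope identified by the weight
`w`: the set of points of `N(f)` on which `w · ·` is minimized. -/
def face {G : PeriodicGraph d n} (f : Polynomial G.LaurentU)
    (w : (Fin d → ℤ) × ℤ) : Set ((Fin d → ℝ) × ℝ) :=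
  {q ∈ newton f | ∀ q' ∈ newton f, dotR w q ≤ dotR w q'}

/-- A set in `ℝ^{d+1}` is vertical if it contains two points `(a,b)` and
`(a,c)` with `b ≠ c`. -/
def IsVertical (F : Set ((Fin d → ℝ) × ℝ)) : Prop :=
  ∃ (a : Fin d → ℝ) (b c : ℝ), b ≠ c ∧ (a, b) ∈ F ∧ (a, c) ∈ F

/-- A set in `ℝ^{d+1}` is a vertical segment if it is a (one-dimensional)
segment and is vertical. -/
def IsVerticalSegment (F : Set ((Fin d → ℝ) × ℝ)) : Prop :=
  (∃ p q : (Fin d → ℝ) × ℝ, p ≠ q ∧ F = segment ℝ p q) ∧ IsVertical F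

/-- `U ⊆ [n]` is a component of the fundamental domain: no edge of `Γ` joins
the `ℤ^d`-orbit of `U` to the `ℤ^d`-orbit of its complement. -/
def IsComponent (G : PeriodicGraph d n) (U : Set (Fin n)) : Prop :=
  ∀ i ∈ U, ∀ j, j ∉ U → G.edges i j = ∅

/-- A fundamental domain of `Γ` is determined by shifts `t i ∈ ℤ^d` of the
vertices of the standard fundamental domain (it is `{(i, t i) : i ∈ [n]}`).
`SupportZeroOn G t U` says that the subset `{(i, t i) : i ∈ U}` of that
fundamental domain has support `0`: every edge between the orbits of vertices
of `U` joins `(i, t i)` to `(j, t j)` with shift `a = 0`. -/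
def SupportZeroOn (G : PeriodicGraph d n) (t : Fin n → (Fin d → ℤ))
    (U : Set (Fin n)) : Prop :=
  ∀ i ∈ U, ∀ j ∈ U, ∀ a ∈ G.edges i j, a = t j - t i

/-- `Γ` has a fundamental domain of support `0`. -/
def HasSupportZeroFD (G : PeriodicGraph d n) : Prop :=
  ∃ t : Fin n → (Fin d → ℤ), G.SupportZeroOn t Set.univ

/-- `Γ` has a fundamental domain with a nonempty component of support `0`. -/
def HasSupportZeroComponent (G : PeriodicGraph d n) : Prop :=
  ∃ (t : Fin n → (Fin d → ℤ)) (U : Set (Fin n)),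
    U.Nonempty ∧ G.IsComponent U ∧ G.SupportZeroOn t U

/-- A subset of the labeling space `ℂ^{V,E}` is algebraic if it is the common
zero locus of a family of polynomials in the variables `(v,e)`. -/
def IsAlgebraicSet {ι : Type*} (S : Set (ι → ℂ)) : Prop :=
  ∃ P : Set (MvPolynomial ι ℂ), S = {x | ∀ p ∈ P, MvPolynomial.eval x p = 0}

/-- A property of labelings holds generically if it holds outside some proper
algebraic subset of the labeling space (i.e., on a nonempty Zariski-open set). -/
def Generic {ι : Type*} (P : (ι → ℂ) → Prop) : Prop :=
  ∃ S : Set (ι → ℂ), IsAlgebraicSet S ∧ S ≠ Set.univ ∧ ∀ x ∉ S, P x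

/-- `g ∈ ℂ[z^{±1}][λ]` has a linear factor in `λ`. -/
def HasLinearFactor (g : Polynomial (LaurentC d)) : Prop :=
  ∃ lam : ℂ, (Polynomial.X - Polynomial.C (algebraMap ℂ (LaurentC d) lam)) ∣ g



/-- The dispersion polynomial `D|_U(z,λ) = det (L|_U(z) - λI)` of the induced
periodic operator on the induced subgraph `Γ_U`, for `U ⊆ [n]`, at a fixed
labeling (the Floquet matrix of the induced operator is the corresponding
principal submatrix of `L(z)`). -/
def dispSub (G : PeriodicGraph d n) (x : G.Labeling) (U : Finset (Fin n)) :
    Polynomial (LaurentC d) :=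
  (Matrix.det (fun i j : {i // i ∈ U} =>
    Polynomial.C (G.floquet x i.1 j.1) - if i = j then Polynomial.X else 0))

/-- Restriction of a Laurent polynomial to the monomials satisfying a
predicate. -/
def laurFilter (p : (Fin d → ℤ) → Prop) (g : LaurentC d) : LaurentC d :=
  AddMonoidAlgebra.ofCoeff (Finsupp.filter p g.coeff)

/-- The facial polynomial `g_w` of `g ∈ ℂ[z^{±1}][λ]`: the sum of the terms of
`g` whose exponent vectors minimize `w · ·` over the support of `g`. -/
def facialC (w : (Fin d → ℤ) × ℤ) (g : Polynomial (LaurentC d)) :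
    Polynomial (LaurentC d) :=
  ∑ b ∈ g.support,
    Polynomial.C (laurFilter
      (fun a => ∀ q ∈ suppC g, dotZ w (a, b) ≤ dotZ w q) (g.coeff b)) *
      Polynomial.X ^ b

/-- The monomial `z^a` in `ℂ[z^{±1}]`. -/
def zMon (a : Fin d → ℤ) : LaurentC d := AddMonoidAlgebra.single a 1

/-- The Sylvester matrix of two polynomials `f, g ∈ R[λ]` (with respect to
their natural degrees `s = deg f` and `t = deg g`): a `(t+s) × (t+s)` matrix
whose first `t` rows are the shifted coefficient sequences of `f` and whose
last `s` rows are the shifted coefficient sequences of `g`. -/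
def sylvester {R : Type*} [CommRing R] (f g : Polynomial R) :
    Matrix (Fin (g.natDegree + f.natDegree)) (Fin (g.natDegree + f.natDegree)) R :=
  fun r c =>
    if (r : ℕ) < g.natDegree then
      (if (r : ℕ) ≤ (c : ℕ) then f.coeff ((c : ℕ) - (r : ℕ)) else 0)
    else
      (if ((r : ℕ) - g.natDegree) ≤ (c : ℕ) then
        g.coeff ((c : ℕ) - ((r : ℕ) - g.natDegree)) else 0)

/-- The resultant of two polynomials in `λ`: the determinant of their
Sylvester matrix. -/
def resultant {R : Type*} [CommRing R] (f g : Polynomial R) : R :=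
  (sylvester f g).det

/-- The simplified quotient graph `S(Γ/ℤ^d)`: the finite simple graph on the
fundamental domain `[n]` with an edge between `i ≠ j` whenever some edge of `Γ`
joins the orbits of `i` and `j`. -/
def simpleQuotient (G : PeriodicGraph d n) : SimpleGraph (Fin n) where
  Adj i j := i ≠ j ∧ (G.edges i j).Nonempty
  symm := ⟨by
    rintro i j ⟨hij, a, ha⟩
    exact ⟨hij.symm, ⟨-a, (G.symm i j a).mp ha⟩⟩⟩
  loopless := ⟨fun i h => h.1 rfl⟩

/-- A property of potentials `(v_1,…,v_n) ∈ ℂ^n` holds generically if it holds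
outside a proper algebraic subset of `ℂ^n`. -/
def GenericPot (P : (Fin n → ℂ) → Prop) : Prop :=
  ∃ S : Set (Fin n → ℂ), IsAlgebraicSet S ∧ S ≠ Set.univ ∧ ∀ x ∉ S, P x

end PeriodicGraph

namespace PeriodicGraph

variable {d n : ℕ}

section Polytope

lemma isLinearMap_dotR (w : (Fin d → ℤ) × ℤ) : IsLinearMap ℝ (dotR w) := by
  constructor
  · intro p q
    simp only [dotR, Prod.fst_add, Prod.snd_add, Pi.add_apply, mul_add]
    rw [Finset.sum_add_distrib]; ring
  · intro c p
    simp only [dotR, Prod.smul_fst, Prod.smul_snd, Pi.smul_apply, smul_eq_mul]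
    rw [mul_add, Finset.mul_sum]
    congr 1
    · exact Finset.sum_congr rfl (fun i _ => by ring)
    · ring

lemma dotR_toPt (w : (Fin d → ℤ) × ℤ) (p : (Fin d → ℤ) × ℕ) :
    dotR w (toPt p) = (dotZ w p : ℝ) := by
  simp only [dotR, toPt, dotZ]
  push_cast
  ring

lemma toPt_mem_newton {G : PeriodicGraph d n} {f : Polynomial G.LaurentU}
    {p : (Fin d → ℤ) × ℕ} (hp : p ∈ genSupp f) : toPt p ∈ newton f :=
  subset_convexHull ℝ _ (Set.mem_image_of_mem _ hp)

lemma newton_dotR_ge {G : PeriodicGraph d n} {f : Polynomial G.LaurentU}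
    (w : (Fin d → ℤ) × ℤ) (m : ℤ) (h : ∀ p ∈ genSupp f, m ≤ dotZ w p) :
    ∀ q ∈ newton f, (m : ℝ) ≤ dotR w q := by
  intro q hq
  have hsub : toPt '' genSupp f ⊆ {x | (m : ℝ) ≤ dotR w x} := by
    rintro x ⟨p, hp, rfl⟩
    simp only [Set.mem_setOf_eq, dotR_toPt]
    exact_mod_cast h p hp
  exact convexHull_min hsub (convex_halfSpace_ge (isLinearMap_dotR w) _) hq

lemma newton_dotR_le {G : PeriodicGraph d n} {f : Polynomial G.LaurentU}
    (w : (Fin d → ℤ) × ℤ) (m : ℤ) (h : ∀ p ∈ genSupp f, dotZ w p ≤ m) :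
    ∀ q ∈ newton f, dotR w q ≤ (m : ℝ) := by
  intro q hq
  have hsub : toPt '' genSupp f ⊆ {x | dotR w x ≤ (m : ℝ)} := by
    rintro x ⟨p, hp, rfl⟩
    simp only [Set.mem_setOf_eq, dotR_toPt]
    exact_mod_cast h p hp
  exact convexHull_min hsub (convex_halfSpace_le (isLinearMap_dotR w) _) hq

lemma face_eq_newton_of_const {G : PeriodicGraph d n} {f : Polynomial G.LaurentU}
    (w : (Fin d → ℤ) × ℤ) (m : ℤ) (h : ∀ p ∈ genSupp f, dotZ w p = m) :
    face f w = newton f := by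
  ext q
  constructor
  · exact fun hq => hq.1
  · intro hq
    refine ⟨hq, fun q' hq' => ?_⟩
    have h1 : dotR w q ≤ (m : ℝ) := newton_dotR_le w m (fun p hp => le_of_eq (h p hp)) q hq
    have h2 : (m : ℝ) ≤ dotR w q' := newton_dotR_ge w m (fun p hp => ge_of_eq (h p hp)) q' hq'
    linarith

/-- A `Finset` version of the generic support. -/
def genSuppFinset {G : PeriodicGraph d n} (f : Polynomial G.LaurentU) :
    Finset ((Fin d → ℤ) × ℕ) :=
  f.support.biUnion (fun b => (f.coeff b).coeff.support.image (fun a => (a, b)))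

lemma mem_genSuppFinset {G : PeriodicGraph d n} (f : Polynomial G.LaurentU)
    (p : (Fin d → ℤ) × ℕ) : p ∈ genSuppFinset f ↔ p ∈ genSupp f := by
  obtain ⟨a, b⟩ := p
  simp only [genSuppFinset, Finset.mem_biUnion, Finset.mem_image, genSupp,
    Set.mem_setOf_eq, Polynomial.mem_support_iff, Finsupp.mem_support_iff]
  constructor
  · rintro ⟨b', hb', a', ha', h⟩
    obtain ⟨rfl, rfl⟩ := Prod.mk.injEq .. ▸ h
    · exact ha'
  · intro h
    refine ⟨b, fun hb => ?_, a, h, rfl⟩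
    rw [hb] at h
    simp at h

end Polytope

section Master

variable (G : PeriodicGraph d n)

/-- The options at matrix entry `(j, i)` of `L(z) - λ I`:
`none` is the `-λ` term, `some none` is the potential `v_i`, and
`some (some a)` is the edge term `e_{(j,i),a} z^a`. -/
def opts (j i : Fin n) : Finset (Option (Option (Fin d → ℤ))) :=
  ((G.edges j i).image fun a => some (some a)) ∪
    (if j = i then {none, some none} else ∅)

/-- The polynomial corresponding to an option. -/
def fOpt (j i : Fin n) : Option (Option (Fin d → ℤ)) → Polynomial G.LaurentU
  | none => -Polynomial.X
  | some none => Polynomial.C (AddMonoidAlgebra.single 0 (MvPolynomial.X (Sum.inl i)))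
  | some (some a) =>
      if h : a ∈ G.edges j i then
        Polynomial.C (AddMonoidAlgebra.single a (MvPolynomial.X (G.edgeVar j i a h)))
      else 0

lemma mem_opts_some_some {j i : Fin n} {a : Fin d → ℤ} :
    some (some a) ∈ G.opts j i ↔ a ∈ G.edges j i := by
  simp only [opts, Finset.mem_union, Finset.mem_image]
  constructor
  · rintro (⟨b, hb, h⟩ | h)
    · obtain rfl : b = a := by simpa using h
      exact hb
    · split at h <;> simp_all
  · intro h
    exact Or.inl ⟨a, h, rfl⟩

lemma mem_opts_none {j i : Fin n} : (none ∈ G.opts j i) ↔ j = i := by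
  simp only [opts, Finset.mem_union, Finset.mem_image]
  constructor
  · rintro (⟨b, _, h⟩ | h)
    · simp at h
    · split at h <;> simp_all
  · intro h
    rw [if_pos h]
    simp

lemma mem_opts_some_none {j i : Fin n} : (some none ∈ G.opts j i) ↔ j = i := by
  simp only [opts, Finset.mem_union, Finset.mem_image]
  constructor
  · rintro (⟨b, _, h⟩ | h)
    · simp at h
    · split at h <;> simp_all
  · intro h
    rw [if_pos h]
    simp

lemma dispMatU_eq_sum_opts (j i : Fin n) :
    G.dispMatU j i = ∑ o ∈ G.opts j i, G.fOpt j i o := by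
  have hdisj : Disjoint ((G.edges j i).image fun a => some (some a))
      (if j = i then ({none, some none} : Finset (Option (Option (Fin d → ℤ)))) else ∅) := by
    rw [Finset.disjoint_left]
    intro o ho
    simp only [Finset.mem_image] at ho
    obtain ⟨a, _, rfl⟩ := ho
    split <;> simp
  rw [opts, Finset.sum_union hdisj]
  have himg : ∑ o ∈ (G.edges j i).image (fun a => some (some a)), G.fOpt j i o
      = Polynomial.C (∑ a ∈ (G.edges j i).attach,
          AddMonoidAlgebra.single a.1 (MvPolynomial.X (G.edgeVar j i a.1 a.2))) := by
    rw [Finset.sum_image (fun x _ y _ h => by simpa using h), map_sum,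
      ← Finset.sum_attach (G.edges j i) (fun a => G.fOpt j i (some (some a)))]
    exact Finset.sum_congr rfl (fun a _ => by simp [fOpt, a.2])
  rw [himg]
  by_cases hji : j = i
  · subst hji
    simp only [dispMatU, floquetU, eq_self_iff_true, if_true, map_add,
      Finset.sum_pair (show (none : Option (Option (Fin d → ℤ))) ≠ some none by simp)]
    simp only [fOpt]
    ring
  · simp only [dispMatU, floquetU, hji, if_false, map_add, map_zero, Finset.sum_empty]
    ring

/-- `z`-exponent of an option. -/
def zO : Option (Option (Fin d → ℤ)) → (Fin d → ℤ)
  | some (some a) => a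
  | _ => 0

/-- `λ`-degree of an option. -/
def bO : Option (Option (Fin d → ℤ)) → ℕ
  | none => 1
  | _ => 0

/-- variable-monomial of an option. -/
def mO (j i : Fin n) : Option (Option (Fin d → ℤ)) → (G.VarIdx →₀ ℕ)
  | none => 0
  | some none => Finsupp.single (Sum.inl i) 1
  | some (some a) =>
      if h : a ∈ G.edges j i then Finsupp.single (G.edgeVar j i a h) 1 else 0

/-- total `z`-exponent of a configuration. -/
def zOf (c : Fin n → Option (Option (Fin d → ℤ))) : Fin d → ℤ := ∑ i, zO (c i)

/-- total `λ`-degree of a configuration. -/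
def bOf (c : Fin n → Option (Option (Fin d → ℤ))) : ℕ := ∑ i, bO (c i)

/-- total variable-monomial of a configuration. -/
def mOf (σ : Equiv.Perm (Fin n)) (c : Fin n → Option (Option (Fin d → ℤ))) :
    G.VarIdx →₀ ℕ := ∑ i, G.mO (σ i) i (c i)

/-- canonical monomial-form polynomial. -/
def canon (k : ℕ) (z : Fin d → ℤ) (mm : G.VarIdx →₀ ℕ) (s : ℂ) : Polynomial G.LaurentU :=
  Polynomial.C (AddMonoidAlgebra.single z (MvPolynomial.monomial mm s)) * Polynomial.X ^ k

lemma canon_mul (k₁ k₂ : ℕ) (z₁ z₂ : Fin d → ℤ) (m₁ m₂ : G.VarIdx →₀ ℕ) (s₁ s₂ : ℂ) :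
    G.canon k₁ z₁ m₁ s₁ * G.canon k₂ z₂ m₂ s₂
      = G.canon (k₁ + k₂) (z₁ + z₂) (m₁ + m₂) (s₁ * s₂) := by
  rw [canon, canon, canon, Polynomial.C_mul_X_pow_eq_monomial, Polynomial.C_mul_X_pow_eq_monomial,
    Polynomial.C_mul_X_pow_eq_monomial, Polynomial.monomial_mul_monomial,
    AddMonoidAlgebra.single_mul_single, MvPolynomial.monomial_mul]

lemma single_zero_monomial_zero :
    (AddMonoidAlgebra.single (0 : Fin d → ℤ)
      (MvPolynomial.monomial (0 : G.VarIdx →₀ ℕ) (1 : ℂ)) : G.LaurentU) = 1 := by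
  rw [MvPolynomial.monomial_zero', map_one]
  exact (AddMonoidAlgebra.one_def).symm

lemma canon_one : G.canon 0 0 0 1 = 1 := by
  rw [canon, pow_zero, mul_one, G.single_zero_monomial_zero, map_one]

lemma canon_intCast (s : ℤ) : ((s : ℤ) : Polynomial G.LaurentU) = G.canon 0 0 0 (s : ℂ) := by
  rw [canon, pow_zero, mul_one]
  have h1 : MvPolynomial.monomial (0 : G.VarIdx →₀ ℕ) ((s : ℂ)) = ((s : ℤ) : G.CoeffRing) := by
    rw [MvPolynomial.monomial_zero', ← map_intCast (MvPolynomial.C : ℂ →+* G.CoeffRing) s]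
  rw [h1]
  have h2 : (AddMonoidAlgebra.single (0 : Fin d → ℤ) ((s : ℤ) : G.CoeffRing) : G.LaurentU)
      = ((s : ℤ) : G.LaurentU) :=
    map_intCast (AddMonoidAlgebra.singleZeroRingHom : G.CoeffRing →+* G.LaurentU) s
  rw [h2, map_intCast]

lemma fOpt_canon (j i : Fin n) (o : Option (Option (Fin d → ℤ)))
    (ho : o ∈ G.opts j i) :
    G.fOpt j i o = G.canon (bO o) (zO o) (G.mO j i o) ((-1 : ℂ) ^ (bO o)) := by
  have hX : G.canon 1 0 0 1 = Polynomial.X := by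
    rw [canon, pow_one, G.single_zero_monomial_zero, map_one, one_mul]
  match o with
  | none =>
      show -Polynomial.X = _
      have hb : bO (none : Option (Option (Fin d → ℤ))) = 1 := rfl
      have hz : zO (none : Option (Option (Fin d → ℤ))) = 0 := rfl
      have hm : G.mO j i (none : Option (Option (Fin d → ℤ))) = 0 := rfl
      rw [hb, hz, hm]
      have h0 : -Polynomial.X = ((-1 : ℤ) : Polynomial G.LaurentU) * Polynomial.X := by
        ring
      rw [h0, G.canon_intCast, ← hX, canon_mul]
      norm_num
  | some none =>
      show Polynomial.C (AddMonoidAlgebra.single 0 (MvPolynomial.X (Sum.inl i))) = _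
      have hb : bO (some (none : Option (Fin d → ℤ))) = 0 := rfl
      have hz : zO (some (none : Option (Fin d → ℤ))) = 0 := rfl
      have hm : G.mO j i (some (none : Option (Fin d → ℤ)))
          = Finsupp.single (Sum.inl i : G.VarIdx) 1 := rfl
      rw [canon, hb, hz, hm, pow_zero, pow_zero, mul_one]
      rfl
  | some (some a) =>
      have h := G.mem_opts_some_some.mp ho
      show (if h : a ∈ G.edges j i then _ else 0) = _
      rw [dif_pos h, canon]
      have hb : bO (some (some a)) = 0 := rfl
      rw [hb, pow_zero, pow_zero, mul_one]
      have hm : G.mO j i (some (some a))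
          = Finsupp.single (G.edgeVar j i a h) 1 := by
        show (if h : a ∈ G.edges j i then _ else 0) = _
        rw [dif_pos h]
      rw [hm]
      rfl

lemma prod_fOpt (σ : Equiv.Perm (Fin n)) (c : Fin n → Option (Option (Fin d → ℤ)))
    (hc : ∀ i, c i ∈ G.opts (σ i) i) :
    ∏ i, G.fOpt (σ i) i (c i)
      = G.canon (bOf c) (zOf c) (G.mOf σ c) ((-1 : ℂ) ^ (bOf c)) := by
  simp only [zOf, bOf, mOf]
  rw [← Finset.prod_pow_eq_pow_sum]
  induction (Finset.univ : Finset (Fin n)) using Finset.induction with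
  | empty => simpa using G.canon_one.symm
  | @insert a s ha ih =>
      rw [Finset.prod_insert ha, Finset.prod_insert ha, Finset.sum_insert ha,
        Finset.sum_insert ha, Finset.sum_insert ha, ih, G.fOpt_canon (σ a) a (c a) (hc a),
        canon_mul]

/-- The configurations: a permutation together with a valid choice of options. -/
def cfgs : Finset ((_ : Equiv.Perm (Fin n)) × (Fin n → Option (Option (Fin d → ℤ)))) :=
  Finset.univ.sigma fun σ => Fintype.piFinset fun i => G.opts (σ i) i

lemma mem_cfgs {x : (_ : Equiv.Perm (Fin n)) × (Fin n → Option (Option (Fin d → ℤ)))} :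
    x ∈ G.cfgs ↔ ∀ i, x.2 i ∈ G.opts (x.1 i) i := by
  obtain ⟨σ, c⟩ := x
  simp [cfgs, Fintype.mem_piFinset]

/-- The `±1` coefficient attached to a configuration. -/
def sgnC (x : (_ : Equiv.Perm (Fin n)) × (Fin n → Option (Option (Fin d → ℤ)))) : ℂ :=
  ((Equiv.Perm.sign x.1 : ℤ) : ℂ) * (-1 : ℂ) ^ (bOf x.2)

lemma dispU_eq_sum_cfgs :
    G.dispU = ∑ x ∈ G.cfgs, G.canon (bOf x.2) (zOf x.2) (G.mOf x.1 x.2) (sgnC x) := by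
  rw [dispU, Matrix.det_apply', cfgs, Finset.sum_sigma]
  refine Finset.sum_congr rfl (fun σ _ => ?_)
  have h1 : ∏ i, G.dispMatU (σ i) i
      = ∑ c ∈ Fintype.piFinset (fun i => G.opts (σ i) i), ∏ i, G.fOpt (σ i) i (c i) := by
    refine Eq.trans ?_ (Finset.prod_univ_sum (fun i => G.opts (σ i) i) (fun i o => G.fOpt (σ i) i o))
    exact Finset.prod_congr rfl fun i _ => G.dispMatU_eq_sum_opts (σ i) i
  rw [h1, Finset.mul_sum]
  refine Finset.sum_congr rfl (fun c hc => ?_)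
  rw [G.prod_fOpt σ c (fun i => Fintype.mem_piFinset.mp hc i), G.canon_intCast, canon_mul,
    zero_add, zero_add, zero_add]
  rfl

lemma coeff_canon (k : ℕ) (z : Fin d → ℤ) (mm : G.VarIdx →₀ ℕ) (s : ℂ)
    (b : ℕ) (a : Fin d → ℤ) (μ : G.VarIdx →₀ ℕ) :
    MvPolynomial.coeff μ (((G.canon k z mm s).coeff b).coeff a)
    = if k = b ∧ z = a ∧ mm = μ then s else 0 := by
  rw [canon, Polynomial.C_mul_X_pow_eq_monomial, Polynomial.coeff_monomial]
  by_cases hk : k = b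
  · rw [if_pos hk, AddMonoidAlgebra.coeff_single_apply]
    by_cases hz : z = a
    · rw [if_pos hz, MvPolynomial.coeff_monomial]
      by_cases hm : mm = μ
      · rw [if_pos hm, if_pos ⟨hk, hz, hm⟩]
      · rw [if_neg hm, if_neg (by tauto)]
    · rw [if_neg hz, if_neg (by tauto)]
      simp
  · rw [if_neg hk, if_neg (by tauto)]
    simp

lemma coeff_dispU (a : Fin d → ℤ) (b : ℕ) (μ : G.VarIdx →₀ ℕ) :
    MvPolynomial.coeff μ ((G.dispU.coeff b).coeff a) =
      ∑ x ∈ G.cfgs,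
        if bOf x.2 = b ∧ zOf x.2 = a ∧ G.mOf x.1 x.2 = μ then sgnC x else 0 := by
  rw [dispU_eq_sum_cfgs, Polynomial.finset_sum_coeff, AddMonoidAlgebra.coeff_sum, Finset.sum_apply',
    MvPolynomial.coeff_sum]
  exact Finset.sum_congr rfl fun x _ =>
    G.coeff_canon (bOf x.2) (zOf x.2) (G.mOf x.1 x.2) (sgnC x) b a μ

end Master

section SignLemma

/-- Two permutations of a finite type with the same cycle relation have equal sign. -/
lemma sign_eq_of_sameCycle {α : Type*} [Fintype α] [DecidableEq α] [LinearOrder α]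
    (σ τ : Equiv.Perm α) (h : ∀ x y, σ.SameCycle x y ↔ τ.SameCycle x y) :
    Equiv.Perm.sign σ = Equiv.Perm.sign τ := by
  have hfix : ∀ (σ τ : Equiv.Perm α), (∀ x y, σ.SameCycle x y ↔ τ.SameCycle x y) →
      ∀ x, σ x ≠ x → τ x ≠ x := by
    intro σ τ h x hx hτ
    have h2 : τ.SameCycle x (σ x) := (h _ _).mp ⟨1, rfl⟩
    obtain ⟨k, hk⟩ := h2
    rw [Equiv.Perm.zpow_apply_eq_self_of_apply_eq_self hτ] at hk
    exact hx hk.symm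
  have hsupp : σ.support = τ.support := by
    ext x
    simp only [Equiv.Perm.mem_support]
    exact ⟨fun hx => hfix σ τ h x hx, fun hx => hfix τ σ (fun a b => (h a b).symm) x hx⟩
  have hsub : ∀ (σ : Equiv.Perm α), ∀ γ ∈ σ.cycleFactorsFinset, γ.support ⊆ σ.support := by
    intro σ γ hγ x hx
    obtain ⟨hcyc, hagree⟩ := Equiv.Perm.mem_cycleFactorsFinset_iff.mp hγ
    rw [Equiv.Perm.mem_support] at hx ⊢
    rw [← hagree x (Equiv.Perm.mem_support.mpr hx)]
    exact hx
  have hne : ∀ (σ : Equiv.Perm α), ∀ γ ∈ σ.cycleFactorsFinset, γ.support.Nonempty := by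
    intro σ γ hγ
    obtain ⟨⟨x, hx, -⟩, -⟩ := Equiv.Perm.mem_cycleFactorsFinset_iff.mp hγ
    exact ⟨x, Equiv.Perm.mem_support.mpr hx⟩
  have hcard : σ.cycleFactorsFinset.card = τ.cycleFactorsFinset.card := by
    refine Finset.card_bij
      (fun γ hγ => τ.cycleOf (γ.support.min' (hne σ γ hγ))) ?_ ?_ ?_
    · intro γ hγ
      have hx : γ.support.min' (hne σ γ hγ) ∈ γ.support := Finset.min'_mem _ _
      have hxσ : γ.support.min' (hne σ γ hγ) ∈ σ.support := hsub σ γ hγ hx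
      rw [Equiv.Perm.cycleOf_mem_cycleFactorsFinset_iff]
      rw [← hsupp]
      exact hxσ
    · intro γ₁ hγ₁ γ₂ hγ₂ heq
      set x₁ := γ₁.support.min' (hne σ γ₁ hγ₁) with hx₁def
      set x₂ := γ₂.support.min' (hne σ γ₂ hγ₂) with hx₂def
      have hx₁ : x₁ ∈ γ₁.support := Finset.min'_mem _ _
      have hx₂ : x₂ ∈ γ₂.support := Finset.min'_mem _ _
      have hx₂τ : x₂ ∈ τ.support := hsupp ▸ hsub σ γ₂ hγ₂ hx₂
      have hx₂mem : x₂ ∈ (τ.cycleOf x₂).support :=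
        Equiv.Perm.mem_support_cycleOf_iff.mpr ⟨Equiv.Perm.SameCycle.refl _ _, hx₂τ⟩
      have heq' : τ.cycleOf x₁ = τ.cycleOf x₂ := heq
      rw [← heq'] at hx₂mem
      have hsc : τ.SameCycle x₁ x₂ :=
        (Equiv.Perm.mem_support_cycleOf_iff.mp hx₂mem).1
      have hscσ : σ.SameCycle x₁ x₂ := (h _ _).mpr hsc
      have e₁ : γ₁ = σ.cycleOf x₁ := Equiv.Perm.cycle_is_cycleOf hx₁ hγ₁
      have e₂ : γ₂ = σ.cycleOf x₂ := Equiv.Perm.cycle_is_cycleOf hx₂ hγ₂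
      rw [e₁, e₂, Equiv.Perm.SameCycle.cycleOf_eq hscσ]
    · intro δ hδ
      have hyne := hne τ δ hδ
      set y := δ.support.min' hyne with hydef
      have hy : y ∈ δ.support := Finset.min'_mem _ _
      have hyτ : y ∈ τ.support := hsub τ δ hδ hy
      have hyσ : y ∈ σ.support := hsupp ▸ hyτ
      have hγmem : σ.cycleOf y ∈ σ.cycleFactorsFinset :=
        Equiv.Perm.cycleOf_mem_cycleFactorsFinset_iff.mpr hyσ
      refine ⟨σ.cycleOf y, hγmem, ?_⟩
      set x := (σ.cycleOf y).support.min' (hne σ _ hγmem) with hxdef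
      have hx : x ∈ (σ.cycleOf y).support := Finset.min'_mem _ _
      have hscσ : σ.SameCycle y x := (Equiv.Perm.mem_support_cycleOf_iff.mp hx).1
      have hscτ : τ.SameCycle y x := (h _ _).mp hscσ
      have h5 : τ.cycleOf x = τ.cycleOf y := (Equiv.Perm.SameCycle.cycleOf_eq hscτ).symm
      show τ.cycleOf x = δ
      rw [h5, ← Equiv.Perm.cycle_is_cycleOf hy hδ]
  have hsign : ∀ (σ : Equiv.Perm α),
      Equiv.Perm.sign σ = (-1 : ℤˣ) ^ (σ.support.card + σ.cycleFactorsFinset.card) := by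
    intro σ
    rw [Equiv.Perm.sign_of_cycleType, ← Equiv.Perm.sum_cycleType σ, Equiv.Perm.cycleType_def,
      Multiset.card_map]
    rfl
  rw [hsign σ, hsign τ, hsupp, hcard]

end SignLemma

section NoCancel

variable (G : PeriodicGraph d n)

/-- `x` and `y` are the endpoints of the edge class `v`. -/
def touches (v : G.EdgeVar) (x y : Fin n) : Prop :=
  ∃ e : G.DirEdge, Quotient.mk G.edgeSetoid e = v ∧
    ((e.1.1 = x ∧ e.1.2.1 = y) ∨ (e.1.1 = y ∧ e.1.2.1 = x))

/-- The adjacency relation on `[n]` extracted from a monomial in the variables. -/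
def mrel (μ : G.VarIdx →₀ ℕ) (x y : Fin n) : Prop :=
  ∃ v : G.EdgeVar, μ (Sum.inr v) ≠ 0 ∧ G.touches v x y

lemma mOf_apply (σ : Equiv.Perm (Fin n)) (c : Fin n → Option (Option (Fin d → ℤ)))
    (wv : G.VarIdx) : G.mOf σ c wv = ∑ i, G.mO (σ i) i (c i) wv := by
  rw [mOf, Finset.sum_apply']

lemma mO_some_some (j i : Fin n) (a : Fin d → ℤ) (h : a ∈ G.edges j i) :
    G.mO j i (some (some a)) = Finsupp.single (G.edgeVar j i a h) 1 := by
  show (if h' : a ∈ G.edges j i then _ else 0) = _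
  rw [dif_pos h]

lemma mOf_edge_ne_zero {σ : Equiv.Perm (Fin n)} {c : Fin n → Option (Option (Fin d → ℤ))}
    (i : Fin n) {a : Fin d → ℤ}
    (ha : c i = some (some a)) (h : a ∈ G.edges (σ i) i) :
    G.mOf σ c (Sum.inr (Quotient.mk G.edgeSetoid ⟨(σ i, i, a), h⟩)) ≠ 0 := by
  rw [mOf_apply]
  intro hzero
  rw [Finset.sum_eq_zero_iff] at hzero
  have hterm := hzero i (Finset.mem_univ i)
  rw [ha, G.mO_some_some (σ i) i a h] at hterm
  rw [show (Sum.inr (Quotient.mk G.edgeSetoid ⟨(σ i, i, a), h⟩) : G.VarIdx)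
    = G.edgeVar (σ i) i a h from rfl, Finsupp.single_eq_same] at hterm
  exact one_ne_zero hterm

lemma exists_edge_of_mOf_ne_zero {σ : Equiv.Perm (Fin n)}
    {c : Fin n → Option (Option (Fin d → ℤ))}
    (hc : ∀ i, c i ∈ G.opts (σ i) i) {v : G.EdgeVar}
    (hv : G.mOf σ c (Sum.inr v) ≠ 0) :
    ∃ (i : Fin n) (a : Fin d → ℤ) (h : a ∈ G.edges (σ i) i),
      c i = some (some a) ∧ Quotient.mk G.edgeSetoid ⟨(σ i, i, a), h⟩ = v := by
  rw [mOf_apply] at hv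
  obtain ⟨i, -, hi⟩ := Finset.exists_ne_zero_of_sum_ne_zero hv
  match hci : c i with
  | none =>
      rw [hci] at hi
      exact absurd rfl hi
  | some none =>
      rw [hci] at hi
      exfalso
      apply hi
      show (Finsupp.single (Sum.inl i : G.VarIdx) 1) (Sum.inr v) = 0
      rw [Finsupp.single_apply, if_neg (by simp)]
  | some (some a) =>
      have h : a ∈ G.edges (σ i) i := G.mem_opts_some_some.mp (hci ▸ hc i)
      rw [hci, G.mO_some_some (σ i) i a h] at hi
      refine ⟨i, a, h, hci, ?_⟩
      by_contra hne
      apply hi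
      rw [Finsupp.single_apply, if_neg ?_]
      intro heq
      rw [edgeVar] at heq
      rw [Sum.inr.injEq] at heq
      exact hne heq

lemma step_mrel {σ : Equiv.Perm (Fin n)} {c : Fin n → Option (Option (Fin d → ℤ))}
    (hc : ∀ i, c i ∈ G.opts (σ i) i) (x : Fin n) :
    Relation.ReflTransGen (G.mrel (G.mOf σ c)) x (σ x) := by
  by_cases hx : σ x = x
  · rw [hx]
  · have hex : ∃ a, c x = some (some a) := by
      match hcx : c x with
      | none => exact absurd (G.mem_opts_none.mp (hcx ▸ hc x)) hx
      | some none => exact absurd (G.mem_opts_some_none.mp (hcx ▸ hc x)) hx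
      | some (some a) => exact ⟨a, rfl⟩
    obtain ⟨a, ha⟩ := hex
    have h : a ∈ G.edges (σ x) x := G.mem_opts_some_some.mp (ha ▸ hc x)
    exact Relation.ReflTransGen.single ⟨Quotient.mk G.edgeSetoid ⟨(σ x, x, a), h⟩,
      G.mOf_edge_ne_zero x ha h, ⟨⟨(σ x, x, a), h⟩, rfl, Or.inr ⟨rfl, rfl⟩⟩⟩

lemma sameCycle_iff_mrel {σ : Equiv.Perm (Fin n)} {c : Fin n → Option (Option (Fin d → ℤ))}
    (hc : ∀ i, c i ∈ G.opts (σ i) i) (x y : Fin n) :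
    σ.SameCycle x y ↔ Relation.ReflTransGen (G.mrel (G.mOf σ c)) x y := by
  constructor
  · intro hsc
    obtain ⟨k, -, -, hk⟩ := Equiv.Perm.SameCycle.exists_pow_eq σ hsc
    have haux : ∀ m : ℕ, Relation.ReflTransGen (G.mrel (G.mOf σ c)) x ((σ ^ m) x) := by
      intro m
      induction m with
      | zero => simp [Relation.ReflTransGen.refl]
      | succ m ih =>
          have hstep := G.step_mrel hc ((σ ^ m) x)
          have : (σ ^ (m + 1)) x = σ ((σ ^ m) x) := by
            rw [pow_succ', Equiv.Perm.mul_apply]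
          rw [this]
          exact ih.trans hstep
    rw [← hk]
    exact haux k
  · intro hrt
    induction hrt with
    | refl => exact Equiv.Perm.SameCycle.refl σ x
    | @tail b c' hab hrel ih =>
        refine Equiv.Perm.SameCycle.trans ih ?_
        obtain ⟨v, hv, e, heq, hends⟩ := hrel
        obtain ⟨i, a, h, hci, hqe⟩ := G.exists_edge_of_mOf_ne_zero hc hv
        have hee := @Quotient.exact _ G.edgeSetoid _ _ (hqe.trans heq.symm)
        have hcyc : σ.SameCycle i (σ i) := ⟨1, rfl⟩
        rcases hee with he | he
        · -- e = ⟨(σ i, i, a), h⟩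
          rw [he] at hends
          rcases hends with ⟨h1, h2⟩ | ⟨h1, h2⟩
          · rw [← h1, ← h2]
            exact hcyc.symm
          · rw [← h1, ← h2]
            exact hcyc
        · -- e = flipEdge ⟨(σ i, i, a), h⟩, so e.1.1 = i, e.1.2.1 = σ i
          rw [he] at hends
          rcases hends with ⟨h1, h2⟩ | ⟨h1, h2⟩
          · rw [show (G.flipEdge ⟨(σ i, i, a), h⟩).1.1 = i from rfl] at h1
            rw [show (G.flipEdge ⟨(σ i, i, a), h⟩).1.2.1 = σ i from rfl] at h2
            rw [← h1, ← h2]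
            exact hcyc
          · rw [show (G.flipEdge ⟨(σ i, i, a), h⟩).1.1 = i from rfl] at h1
            rw [show (G.flipEdge ⟨(σ i, i, a), h⟩).1.2.1 = σ i from rfl] at h2
            rw [← h1, ← h2]
            exact hcyc.symm

lemma sgnC_eq_of_data {x y : (_ : Equiv.Perm (Fin n)) × (Fin n → Option (Option (Fin d → ℤ)))}
    (hx : x ∈ G.cfgs) (hy : y ∈ G.cfgs) (hb : bOf x.2 = bOf y.2)
    (hm : G.mOf x.1 x.2 = G.mOf y.1 y.2) : sgnC x = sgnC y := by
  have hsc : ∀ u v, x.1.SameCycle u v ↔ y.1.SameCycle u v := by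
    intro u v
    rw [G.sameCycle_iff_mrel (G.mem_cfgs.mp hx) u v, hm,
      ← G.sameCycle_iff_mrel (G.mem_cfgs.mp hy) u v]
  have hs := sign_eq_of_sameCycle x.1 y.1 hsc
  rw [sgnC, sgnC, hb, hs]

lemma sgnC_ne_zero (x : (_ : Equiv.Perm (Fin n)) × (Fin n → Option (Option (Fin d → ℤ)))) :
    sgnC x ≠ 0 := by
  rw [sgnC]
  apply mul_ne_zero
  · rcases Int.units_eq_one_or (Equiv.Perm.sign x.1) with hs | hs <;> rw [hs] <;> norm_num
  · apply pow_ne_zero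
    norm_num

lemma cfg_mem_fullSupp {x : (_ : Equiv.Perm (Fin n)) × (Fin n → Option (Option (Fin d → ℤ)))}
    (hx : x ∈ G.cfgs) :
    (zOf x.2, bOf x.2, G.mOf x.1 x.2) ∈ fullSupp G.dispU := by
  show MvPolynomial.coeff (G.mOf x.1 x.2) ((G.dispU.coeff (bOf x.2)).coeff (zOf x.2)) ≠ 0
  rw [G.coeff_dispU]
  have hcongr : ∀ y ∈ G.cfgs,
      (if bOf y.2 = bOf x.2 ∧ zOf y.2 = zOf x.2 ∧ G.mOf y.1 y.2 = G.mOf x.1 x.2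
        then sgnC y else 0)
      = (if bOf y.2 = bOf x.2 ∧ zOf y.2 = zOf x.2 ∧ G.mOf y.1 y.2 = G.mOf x.1 x.2
        then sgnC x else 0) := by
    intro y hy
    split_ifs with hcond
    · exact G.sgnC_eq_of_data hy hx hcond.1 hcond.2.2
    · rfl
  rw [Finset.sum_congr rfl hcongr, ← Finset.sum_filter, Finset.sum_const]
  have hxmem : x ∈ G.cfgs.filter (fun y =>
      bOf y.2 = bOf x.2 ∧ zOf y.2 = zOf x.2 ∧ G.mOf y.1 y.2 = G.mOf x.1 x.2) :=
    Finset.mem_filter.mpr ⟨hx, rfl, rfl, rfl⟩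
  have hcard : (G.cfgs.filter (fun y =>
      bOf y.2 = bOf x.2 ∧ zOf y.2 = zOf x.2 ∧ G.mOf y.1 y.2 = G.mOf x.1 x.2)).card ≠ 0 :=
    Finset.card_ne_zero_of_mem hxmem
  rw [nsmul_eq_mul]
  exact mul_ne_zero (Nat.cast_ne_zero.mpr hcard) (sgnC_ne_zero x)

lemma exists_cfg_of_mem_fullSupp {r : (Fin d → ℤ) × ℕ × (G.VarIdx →₀ ℕ)}
    (hr : r ∈ fullSupp G.dispU) :
    ∃ x ∈ G.cfgs, bOf x.2 = r.2.1 ∧ zOf x.2 = r.1 ∧ G.mOf x.1 x.2 = r.2.2 := by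
  have hne : MvPolynomial.coeff r.2.2 ((G.dispU.coeff r.2.1).coeff r.1) ≠ 0 := hr
  rw [G.coeff_dispU] at hne
  obtain ⟨x, hx, hxne⟩ := Finset.exists_ne_zero_of_sum_ne_zero hne
  refine ⟨x, hx, ?_⟩
  by_contra hcond
  rw [if_neg (by tauto)] at hxne
  exact hxne rfl

lemma genSupp_eq_exists_fullSupp (p : (Fin d → ℤ) × ℕ) :
    p ∈ genSupp G.dispU ↔ ∃ μ : G.VarIdx →₀ ℕ, (p.1, p.2, μ) ∈ fullSupp G.dispU := by
  constructor
  · intro hp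
    obtain ⟨μ, hμ⟩ := MvPolynomial.ne_zero_iff.mp hp
    exact ⟨μ, hμ⟩
  · rintro ⟨μ, hμ⟩
    intro h0
    apply hμ
    show MvPolynomial.coeff μ ((G.dispU.coeff p.2).coeff p.1) = 0
    rw [h0]
    simp

end NoCancel

section Flow

/-- Arcs: (source, target, label). -/
abbrev Arc (d n : ℕ) : Type := Fin n × Fin n × (Fin d → ℤ)

/-- source of an arc -/
def asrc (x : Arc d n) : Fin n := x.1

/-- target of an arc -/
def atgt (x : Arc d n) : Fin n := x.2.1

variable (w1 : Fin d → ℤ)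

/-- weight of an arc -/
def wArc (x : Arc d n) : ℤ := ∑ j, w1 j * x.2.2 j

/-- total weight of a multiset of arcs -/
def wMul (M : Multiset (Arc d n)) : ℤ := (M.map (wArc w1)).sum

/-- out-multiplicity of a vertex -/
def srcC (M : Multiset (Arc d n)) (v : Fin n) : ℕ := (M.map asrc).count v

/-- in-multiplicity of a vertex -/
def tgtC (M : Multiset (Arc d n)) (v : Fin n) : ℕ := (M.map atgt).count v

/-- balanced multiset of arcs -/
def Bal (M : Multiset (Arc d n)) : Prop := ∀ v, srcC M v = tgtC M v

/-- a cover: a set of arcs with distinct sources, distinct targets, and equal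
source and target sets (i.e. a union of vertex-disjoint simple cycles). -/
def IsCover (K : Finset (Arc d n)) : Prop :=
  (K.val.map asrc).Nodup ∧ (K.val.map atgt).Nodup ∧
    K.image asrc = K.image atgt

lemma srcC_add (M N : Multiset (Arc d n)) (v : Fin n) :
    srcC (M + N) v = srcC M v + srcC N v := by
  rw [srcC, Multiset.map_add, Multiset.count_add]
  rfl

lemma tgtC_add (M N : Multiset (Arc d n)) (v : Fin n) :
    tgtC (M + N) v = tgtC M v + tgtC N v := by
  rw [tgtC, Multiset.map_add, Multiset.count_add]
  rfl

lemma wMul_add (M N : Multiset (Arc d n)) :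
    wMul w1 (M + N) = wMul w1 M + wMul w1 N := by
  rw [wMul, Multiset.map_add, Multiset.sum_add]
  rfl

lemma srcC_sum {ι : Type*} (s : Finset ι) (F : ι → Multiset (Arc d n)) (v : Fin n) :
    srcC (∑ i ∈ s, F i) v = ∑ i ∈ s, srcC (F i) v := by
  induction s using Finset.induction with
  | empty => simp [srcC]
  | @insert a s ha ih => rw [Finset.sum_insert ha, Finset.sum_insert ha, srcC_add, ih]

lemma tgtC_sum {ι : Type*} (s : Finset ι) (F : ι → Multiset (Arc d n)) (v : Fin n) :
    tgtC (∑ i ∈ s, F i) v = ∑ i ∈ s, tgtC (F i) v := by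
  induction s using Finset.induction with
  | empty => simp [tgtC]
  | @insert a s ha ih => rw [Finset.sum_insert ha, Finset.sum_insert ha, tgtC_add, ih]

lemma wMul_sum {ι : Type*} (s : Finset ι) (F : ι → Multiset (Arc d n)) :
    wMul w1 (∑ i ∈ s, F i) = ∑ i ∈ s, wMul w1 (F i) := by
  induction s using Finset.induction with
  | empty => simp [wMul]
  | @insert a s ha ih => rw [Finset.sum_insert ha, Finset.sum_insert ha, wMul_add, ih]

lemma isCover_bal {K : Finset (Arc d n)} (hK : IsCover K) : Bal K.val := by
  intro v
  obtain ⟨hs, ht, hst⟩ := hK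
  have h1 : srcC K.val v = if v ∈ K.image asrc then 1 else 0 := by
    rw [srcC]
    split_ifs with hv
    · exact Multiset.count_eq_one_of_mem hs (by
        rw [Finset.mem_image] at hv
        obtain ⟨x, hx, rfl⟩ := hv
        exact Multiset.mem_map_of_mem _ hx)
    · rw [Multiset.count_eq_zero]
      intro hmem
      apply hv
      obtain ⟨x, hx, rfl⟩ := Multiset.mem_map.mp hmem
      exact Finset.mem_image_of_mem _ hx
  have h2 : tgtC K.val v = if v ∈ K.image atgt then 1 else 0 := by
    rw [tgtC]
    split_ifs with hv
    · exact Multiset.count_eq_one_of_mem ht (by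
        rw [Finset.mem_image] at hv
        obtain ⟨x, hx, rfl⟩ := hv
        exact Multiset.mem_map_of_mem _ hx)
    · rw [Multiset.count_eq_zero]
      intro hmem
      apply hv
      obtain ⟨x, hx, rfl⟩ := Multiset.mem_map.mp hmem
      exact Finset.mem_image_of_mem _ hx
  rw [h1, h2, hst]

lemma sum_count_eq {β : Type*} [DecidableEq β] (A : Finset β) (s : Multiset β) :
    ∑ v ∈ A, s.count v = (s.filter (· ∈ A)).card := by
  induction s using Multiset.induction with
  | empty => simp
  | cons a s ih =>
      rw [Multiset.filter_cons, Multiset.card_add]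
      simp only [Multiset.count_cons]
      rw [Finset.sum_add_distrib, ih, add_comm]
      congr 1
      rw [Finset.sum_ite_eq' A a (fun _ => 1)]
      split_ifs <;> simp

lemma card_filter_le_of_imp {β : Type*} (M : Multiset β) (p q : β → Prop)
    [DecidablePred p] [DecidablePred q] (h : ∀ x ∈ M, p x → q x) :
    (M.filter p).card ≤ (M.filter q).card := by
  apply Multiset.card_le_card
  rw [Multiset.le_iff_count]
  intro x
  rw [Multiset.count_filter, Multiset.count_filter]
  split_ifs with hp hq
  · exact le_rfl
  · have hx : x ∉ M := fun hx => hq (h x hx hp)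
    rw [Multiset.count_eq_zero_of_notMem hx]
  all_goals exact Nat.zero_le _

lemma exists_cover_split (r : ℕ) (M : Multiset (Arc d n)) (hbal : Bal M)
    (hdeg : ∀ v, srcC M v ≤ r + 1) :
    ∃ K : Finset (Arc d n), IsCover K ∧ K.val ≤ M ∧ Bal (M - K.val) ∧
      (∀ v, srcC (M - K.val) v ≤ r) := by
  classical
  set t : Fin n → Finset (Fin n) := fun v =>
    ((M.filter fun x => asrc x = v).toFinset.image atgt) ∪
      (if srcC M v ≤ r then {v} else ∅) with ht
  have htv : ∀ v, srcC M v ≤ r → v ∈ t v := by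
    intro v hv
    rw [ht]
    simp only [Finset.mem_union]
    right
    rw [if_pos hv]
    exact Finset.mem_singleton_self v
  have htgt : ∀ x ∈ M, atgt x ∈ t (asrc x) := by
    intro x hx
    rw [ht]
    simp only [Finset.mem_union]
    left
    refine Finset.mem_image_of_mem atgt ?_
    rw [Multiset.mem_toFinset, Multiset.mem_filter]
    exact ⟨hx, rfl⟩
  have hhall : ∀ A : Finset (Fin n), A.card ≤ (A.biUnion t).card := by
    intro A
    set B := A.biUnion t with hB
    have hAB : ∀ v ∈ A, t v ⊆ B := fun v hv => Finset.subset_biUnion_of_mem t hv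
    have e1 : ∑ v ∈ A, srcC M v = (M.filter fun x => asrc x ∈ A).card := by
      simp only [srcC]
      rw [sum_count_eq A (M.map asrc), Multiset.filter_map, Multiset.card_map]
      rfl
    have e2 : ∑ u ∈ B, tgtC M u = (M.filter fun x => atgt x ∈ B).card := by
      simp only [tgtC]
      rw [sum_count_eq B (M.map atgt), Multiset.filter_map, Multiset.card_map]
      rfl
    have e3 : (M.filter fun x => asrc x ∈ A).card ≤ (M.filter fun x => atgt x ∈ B).card :=
      card_filter_le_of_imp M _ _ (fun x hx hpx => hAB (asrc x) hpx (htgt x hx))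
    have e4 : ∑ v ∈ A, (r + 1 - srcC M v) ≤ ∑ u ∈ B, (r + 1 - srcC M u) := by
      have hsub : A.filter (fun v => r + 1 - srcC M v ≠ 0) ⊆ B := by
        intro v hv
        rw [Finset.mem_filter] at hv
        obtain ⟨hvA, hvne⟩ := hv
        have hsr : srcC M v ≤ r := by omega
        exact hAB v hvA (htv v hsr)
      calc ∑ v ∈ A, (r + 1 - srcC M v)
          = ∑ v ∈ A.filter (fun v => r + 1 - srcC M v ≠ 0), (r + 1 - srcC M v) :=
            (Finset.sum_filter_ne_zero A).symm
        _ ≤ ∑ u ∈ B, (r + 1 - srcC M u) := Finset.sum_le_sum_of_subset hsub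
    have hsumA : (r + 1) * A.card = ∑ v ∈ A, srcC M v + ∑ v ∈ A, (r + 1 - srcC M v) := by
      rw [← Finset.sum_add_distrib]
      rw [Finset.sum_congr rfl (fun v _ => Nat.add_sub_cancel' (hdeg v))]
      rw [Finset.sum_const, smul_eq_mul, mul_comm]
    have hsumB : ∑ u ∈ B, srcC M u + ∑ u ∈ B, (r + 1 - srcC M u) = (r + 1) * B.card := by
      rw [← Finset.sum_add_distrib]
      rw [Finset.sum_congr rfl (fun v _ => Nat.add_sub_cancel' (hdeg v))]
      rw [Finset.sum_const, smul_eq_mul, mul_comm]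
    have hbalsum : ∑ u ∈ B, tgtC M u = ∑ u ∈ B, srcC M u :=
      Finset.sum_congr rfl (fun u _ => (hbal u).symm)
    have hfinal : (r + 1) * A.card ≤ (r + 1) * B.card := by
      calc (r + 1) * A.card = ∑ v ∈ A, srcC M v + ∑ v ∈ A, (r + 1 - srcC M v) := hsumA
        _ ≤ ∑ u ∈ B, srcC M u + ∑ u ∈ B, (r + 1 - srcC M u) := by
            apply Nat.add_le_add _ e4
            rw [e1, ← hbalsum, e2]
            exact e3
        _ = (r + 1) * B.card := hsumB
    exact Nat.le_of_mul_le_mul_left hfinal (Nat.succ_pos r)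
  obtain ⟨f, hfinj, hft⟩ := (Finset.all_card_le_biUnion_card_iff_exists_injective t).mp hhall
  set active : Finset (Fin n) := Finset.univ.filter (fun v => r + 1 ≤ srcC M v ∨ f v ≠ v)
    with hactive
  have hpick : ∀ v ∈ active, ∃ x, x ∈ M ∧ asrc x = v ∧ atgt x = f v := by
    intro v hv
    have hfv := hft v
    rw [ht] at hfv
    simp only [Finset.mem_union] at hfv
    rcases hfv with hfv | hfv
    · rw [Finset.mem_image] at hfv
      obtain ⟨x, hx, hxt⟩ := hfv
      rw [Multiset.mem_toFinset, Multiset.mem_filter] at hx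
      exact ⟨x, hx.1, hx.2, hxt⟩
    · exfalso
      rw [hactive, Finset.mem_filter] at hv
      split_ifs at hfv with hsrc
      · rw [Finset.mem_singleton] at hfv
        rcases hv.2 with h | h
        · omega
        · exact h hfv
      · simp at hfv
  set pickA : Fin n → Arc d n := fun v =>
    if h : ∃ x, x ∈ M ∧ asrc x = v ∧ atgt x = f v then h.choose else (v, f v, 0)
    with hpickA
  have hsrcpick : ∀ v, asrc (pickA v) = v := by
    intro v
    rw [hpickA]
    dsimp only
    split_ifs with h
    · exact h.choose_spec.2.1
    · rfl
  have htgtpick : ∀ v, atgt (pickA v) = f v := by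
    intro v
    rw [hpickA]
    dsimp only
    split_ifs with h
    · exact h.choose_spec.2.2
    · rfl
  have hmempick : ∀ v ∈ active, pickA v ∈ M := by
    intro v hv
    rw [hpickA]
    dsimp only
    rw [dif_pos (hpick v hv)]
    exact (hpick v hv).choose_spec.1
  have hpickinj : Function.Injective pickA := by
    intro u v huv
    rw [← hsrcpick u, ← hsrcpick v, huv]
  set K : Finset (Arc d n) := active.map ⟨pickA, hpickinj⟩ with hK
  have hKval : K.val = active.val.map pickA := rfl
  have hmapsrc : K.val.map asrc = active.val := by
    rw [hKval, Multiset.map_map, show (asrc ∘ pickA) = id from funext hsrcpick]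
    exact Multiset.map_id _
  have hmaptgt : K.val.map atgt = active.val.map f := by
    rw [hKval, Multiset.map_map]
    exact Multiset.map_congr rfl (fun v _ => htgtpick v)
  have himgf : active.image f = active := by
    apply Finset.eq_of_subset_of_card_le
    · intro u hu
      rw [Finset.mem_image] at hu
      obtain ⟨v, hv, rfl⟩ := hu
      by_contra hfu
      rw [hactive, Finset.mem_filter] at hfu
      push_neg at hfu
      obtain ⟨hle, hfix⟩ := hfu (Finset.mem_univ _)
      have hfvv : f v = v := hfinj hfix
      rw [hactive, Finset.mem_filter] at hv
      rcases hv.2 with h | h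
      · rw [hfvv] at hle
        omega
      · exact h hfvv
    · rw [Finset.card_image_of_injective _ hfinj]
  have himgsrc : K.image asrc = active := by
    ext v
    rw [Finset.mem_image]
    constructor
    · rintro ⟨x, hx, rfl⟩
      have hmm : asrc x ∈ K.val.map asrc := Multiset.mem_map_of_mem _ hx
      rw [hmapsrc] at hmm
      exact hmm
    · intro hv
      exact ⟨pickA v, Finset.mem_map.mpr ⟨v, hv, rfl⟩, hsrcpick v⟩
  have himgtgt : K.image atgt = active := by
    ext v
    rw [Finset.mem_image]
    constructor
    · rintro ⟨x, hx, rfl⟩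
      have hmm : atgt x ∈ K.val.map atgt := Multiset.mem_map_of_mem _ hx
      rw [hmaptgt] at hmm
      obtain ⟨u, hu, heq⟩ := Multiset.mem_map.mp hmm
      rw [← heq, ← himgf]
      exact Finset.mem_image_of_mem f hu
    · intro hv
      have hv2 : v ∈ active.image f := by rw [himgf]; exact hv
      rw [Finset.mem_image] at hv2
      obtain ⟨u, hu, rfl⟩ := hv2
      exact ⟨pickA u, Finset.mem_map.mpr ⟨u, hu, rfl⟩, htgtpick u⟩
  have hcov : IsCover K := by
    refine ⟨?_, ?_, himgsrc.trans himgtgt.symm⟩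
    · rw [hmapsrc]
      exact active.nodup
    · rw [hmaptgt]
      exact Multiset.Nodup.map hfinj active.nodup
  have hKM : K.val ≤ M := by
    rw [Multiset.le_iff_count]
    intro x
    by_cases hx : x ∈ K.val
    · rw [Multiset.count_eq_one_of_mem K.nodup hx, Multiset.one_le_count_iff_mem]
      rw [hKval] at hx
      obtain ⟨v, hv, rfl⟩ := Multiset.mem_map.mp hx
      exact hmempick v hv
    · rw [Multiset.count_eq_zero_of_notMem hx]
      exact Nat.zero_le _
  have hsrcK : ∀ v, srcC K.val v = if v ∈ active then 1 else 0 := by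
    intro v
    rw [srcC, hmapsrc]
    split_ifs with hv
    · exact Multiset.count_eq_one_of_mem active.nodup hv
    · exact Multiset.count_eq_zero_of_notMem (fun h => hv h)
  have htgtK : ∀ v, tgtC K.val v = if v ∈ active then 1 else 0 := by
    intro v
    rw [tgtC, hmaptgt]
    split_ifs with hv
    · have hv2 : v ∈ active.image f := by rw [himgf]; exact hv
      rw [Finset.mem_image] at hv2
      obtain ⟨u, hu, rfl⟩ := hv2
      exact Multiset.count_eq_one_of_mem (Multiset.Nodup.map hfinj active.nodup)
        (Multiset.mem_map_of_mem f hu)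
    · apply Multiset.count_eq_zero_of_notMem
      intro hmem
      obtain ⟨u, hu, rfl⟩ := Multiset.mem_map.mp hmem
      apply hv
      rw [← himgf]
      exact Finset.mem_image_of_mem f hu
  have hsrcsub : ∀ v, srcC (M - K.val) v = srcC M v - srcC K.val v := by
    intro v
    have e := srcC_add (M - K.val) K.val v
    rw [tsub_add_cancel_of_le hKM] at e
    omega
  have htgtsub : ∀ v, tgtC (M - K.val) v = tgtC M v - tgtC K.val v := by
    intro v
    have e := tgtC_add (M - K.val) K.val v
    rw [tsub_add_cancel_of_le hKM] at e
    omega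
  refine ⟨K, hcov, hKM, ?_, ?_⟩
  · intro v
    rw [hsrcsub, htgtsub, hsrcK, htgtK, hbal v]
  · intro v
    rw [hsrcsub, hsrcK]
    by_cases hv : r + 1 ≤ srcC M v
    · have hva : v ∈ active := by
        rw [hactive, Finset.mem_filter]
        exact ⟨Finset.mem_univ v, Or.inl hv⟩
      rw [if_pos hva]
      have := hdeg v
      omega
    · split_ifs <;> omega

lemma exists_cover_avg (r : ℕ) (M : Multiset (Arc d n)) (hbal : Bal M)
    (hdeg : ∀ v, srcC M v ≤ r) :
    ∃ K : Finset (Arc d n), IsCover K ∧ (∀ x ∈ K, x ∈ M) ∧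
      (r : ℤ) * wMul w1 K.val ≤ wMul w1 M := by
  induction r generalizing M with
  | zero =>
      have hM : M = 0 := by
        by_contra hM
        obtain ⟨x, hx⟩ := Multiset.exists_mem_of_ne_zero hM
        have h1 : srcC M (asrc x) = 0 := Nat.le_zero.mp (hdeg _)
        rw [srcC, Multiset.count_eq_zero] at h1
        exact h1 (Multiset.mem_map_of_mem asrc hx)
      subst hM
      refine ⟨∅, ⟨by simp, by simp, by simp⟩, by simp, ?_⟩
      simp [wMul]
  | succ r ih =>
      obtain ⟨K₁, hK₁cov, hK₁le, hbal', hdeg'⟩ := exists_cover_split r M hbal hdeg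
      obtain ⟨K₂, hK₂cov, hK₂mem, hK₂w⟩ := ih (M - K₁.val) hbal' hdeg'
      have hsplit : wMul w1 M = wMul w1 (M - K₁.val) + wMul w1 K₁.val := by
        rw [← wMul_add, tsub_add_cancel_of_le hK₁le]
      have hmem2 : ∀ x ∈ K₂, x ∈ M := fun x hx =>
        Multiset.mem_of_le (tsub_le_self) (hK₂mem x hx)
      have hmem1 : ∀ x ∈ K₁, x ∈ M := fun x hx =>
        Multiset.mem_of_le hK₁le hx
      by_cases hcmp : wMul w1 K₂.val ≤ wMul w1 K₁.val
      · refine ⟨K₂, hK₂cov, hmem2, ?_⟩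
        push_cast
        nlinarith [hK₂w, hsplit]
      · refine ⟨K₁, hK₁cov, hmem1, ?_⟩
        push_cast
        have hr : (0 : ℤ) ≤ (r : ℤ) := Int.ofNat_nonneg r
        nlinarith [hK₂w, hsplit]

end Flow

section Connect

variable (G : PeriodicGraph d n)

/-- arcs compatible with the graph: label is an edge from the orbit of the
target vertex to the orbit of the source vertex (matrix-entry convention). -/
def ArcValid (x : Arc d n) : Prop := x.2.2 ∈ G.edges x.2.1 x.1

lemma mOf_inl {σ : Equiv.Perm (Fin n)} {c : Fin n → Option (Option (Fin d → ℤ))}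
    (i : Fin n) (h : G.mOf σ c (Sum.inl i) ≠ 0) : c i = some none := by
  rw [mOf_apply] at h
  obtain ⟨j, -, hj⟩ := Finset.exists_ne_zero_of_sum_ne_zero h
  match hcj : c j with
  | none =>
      rw [hcj] at hj
      exact absurd rfl hj
  | some (some a) =>
      rw [hcj] at hj
      exfalso
      apply hj
      show (if h' : a ∈ G.edges (σ j) j
        then Finsupp.single (G.edgeVar (σ j) j a h') 1 else 0) (Sum.inl i) = 0
      split_ifs with h'
      · rw [Finsupp.single_apply, if_neg (by simp [edgeVar])]
      · rfl
  | some none =>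
      rw [hcj] at hj
      have hji : j = i := by
        by_contra hne
        apply hj
        show (Finsupp.single (Sum.inl j : G.VarIdx) 1) (Sum.inl i) = 0
        rw [Finsupp.single_apply, if_neg (by simp [hne])]
      rw [← hji]
      exact hcj

lemma cover_of_cfg (w1 : Fin d → ℤ)
    {x : (_ : Equiv.Perm (Fin n)) × (Fin n → Option (Option (Fin d → ℤ)))}
    (hx : x ∈ G.cfgs) :
    ∃ K : Finset (Arc d n), IsCover K ∧ (∀ a ∈ K, G.ArcValid a) ∧
      wMul w1 K.val = (∑ j, w1 j * zOf x.2 j) ∧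
      (∀ v, x.2 v = some none → srcC K.val v = 0) := by
  obtain ⟨σ, c⟩ := x
  have hc : ∀ i, c i ∈ G.opts (σ i) i := G.mem_cfgs.mp hx
  classical
  set active : Finset (Fin n) := Finset.univ.filter (fun v => ∃ a, c v = some (some a))
    with hactive
  set mk : Fin n → Arc d n := fun v => (v, σ v, zO (c v)) with hmk
  have hmkinj : Function.Injective mk := by
    intro u v h
    exact congrArg Prod.fst h
  set K : Finset (Arc d n) := active.map ⟨mk, hmkinj⟩ with hKdef
  have hfix : ∀ v, v ∉ active → σ v = v := by
    intro v hv
    rw [hactive, Finset.mem_filter] at hv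
    push_neg at hv
    have hvn := hv (Finset.mem_univ v)
    match hcv : c v with
    | none => exact G.mem_opts_none.mp (hcv ▸ hc v)
    | some none => exact G.mem_opts_some_none.mp (hcv ▸ hc v)
    | some (some a) => exact absurd hcv (hvn a)
  have hσactive : ∀ v ∈ active, σ v ∈ active := by
    intro v hv
    by_contra hsv
    have h1 : σ (σ v) = σ v := hfix _ hsv
    have h2 : σ v = v := σ.injective h1
    rw [h2] at hsv
    exact hsv hv
  have himgf : active.image σ = active := by
    apply Finset.eq_of_subset_of_card_le
    · intro u hu
      rw [Finset.mem_image] at hu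
      obtain ⟨v, hv, rfl⟩ := hu
      exact hσactive v hv
    · rw [Finset.card_image_of_injective _ σ.injective]
  have hKval : K.val = active.val.map mk := rfl
  have hmapsrc : K.val.map asrc = active.val := by
    rw [hKval, Multiset.map_map, show (asrc ∘ mk) = id from funext (fun v => rfl)]
    exact Multiset.map_id _
  have hmaptgt : K.val.map atgt = active.val.map σ := by
    rw [hKval, Multiset.map_map]
    exact Multiset.map_congr rfl (fun v _ => rfl)
  have himgsrc : K.image asrc = active := by
    ext v
    rw [Finset.mem_image]
    constructor
    · rintro ⟨y, hy, rfl⟩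
      have hmm : asrc y ∈ K.val.map asrc := Multiset.mem_map_of_mem _ hy
      rw [hmapsrc] at hmm
      exact hmm
    · intro hv
      exact ⟨mk v, Finset.mem_map.mpr ⟨v, hv, rfl⟩, rfl⟩
  have himgtgt : K.image atgt = active := by
    ext v
    rw [Finset.mem_image]
    constructor
    · rintro ⟨y, hy, rfl⟩
      have hmm : atgt y ∈ K.val.map atgt := Multiset.mem_map_of_mem _ hy
      rw [hmaptgt] at hmm
      obtain ⟨u, hu, heq⟩ := Multiset.mem_map.mp hmm
      rw [← heq]
      exact hσactive u hu
    · intro hv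
      have hv2 : v ∈ active.image σ := by rw [himgf]; exact hv
      rw [Finset.mem_image] at hv2
      obtain ⟨u, hu, rfl⟩ := hv2
      exact ⟨mk u, Finset.mem_map.mpr ⟨u, hu, rfl⟩, rfl⟩
  have hcov : IsCover K := by
    refine ⟨?_, ?_, himgsrc.trans himgtgt.symm⟩
    · rw [hmapsrc]
      exact active.nodup
    · rw [hmaptgt]
      exact Multiset.Nodup.map σ.injective active.nodup
  have hvalid : ∀ a ∈ K, G.ArcValid a := by
    intro a ha
    rw [hKdef, Finset.mem_map] at ha
    obtain ⟨v, hv, rfl⟩ := ha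
    rw [hactive, Finset.mem_filter] at hv
    obtain ⟨-, av, hav⟩ := hv
    show zO (c v) ∈ G.edges (σ v) v
    have hz : zO (c v) = av := by rw [hav]; rfl
    rw [hz]
    exact G.mem_opts_some_some.mp (hav ▸ hc v)
  have hzO0 : ∀ v, v ∉ active → zO (c v) = 0 := by
    intro v hv
    rw [hactive, Finset.mem_filter] at hv
    push_neg at hv
    have hvn := hv (Finset.mem_univ v)
    match hcv : c v with
    | none => rfl
    | some none => rfl
    | some (some a) => exact absurd hcv (hvn a)
  have hweight : wMul w1 K.val = ∑ j, w1 j * zOf c j := by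
    have h1 : wMul w1 K.val = ∑ v ∈ active, wArc w1 (mk v) := by
      rw [wMul, hKval, Multiset.map_map]
      rfl
    rw [h1]
    have h2 : ∀ v ∈ active, wArc w1 (mk v) = ∑ j, w1 j * zO (c v) j := fun v _ => rfl
    rw [Finset.sum_congr rfl h2]
    have h3 : ∑ v ∈ active, ∑ j, w1 j * zO (c v) j
        = ∑ v ∈ Finset.univ, ∑ j, w1 j * zO (c v) j := by
      apply Finset.sum_subset (Finset.subset_univ active)
      intro v _ hv
      rw [Finset.sum_eq_zero]
      intro j _
      rw [hzO0 v hv]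
      simp
    rw [h3, Finset.sum_comm]
    refine Finset.sum_congr rfl (fun j _ => ?_)
    rw [zOf, Finset.sum_apply, Finset.mul_sum]
  refine ⟨K, hcov, hvalid, hweight, ?_⟩
  intro v hv
  have hv' : c v = some none := hv
  rw [srcC, hmapsrc, Multiset.count_eq_zero]
  intro hmem
  have hva : v ∈ active := hmem
  rw [hactive, Finset.mem_filter] at hva
  obtain ⟨-, a, ha⟩ := hva
  rw [hv'] at ha
  simp at ha

lemma cfg_of_cover (w1 : Fin d → ℤ) (K : Finset (Arc d n)) (hcov : IsCover K)
    (hval : ∀ a ∈ K, G.ArcValid a) :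
    ∃ x ∈ G.cfgs, bOf x.2 = 0 ∧ (∑ j, w1 j * zOf x.2 j) = wMul w1 K.val := by
  classical
  obtain ⟨hnods, hnodt, himg⟩ := hcov
  have hinjKt : ∀ a₁ ∈ K, ∀ a₂ ∈ K, atgt a₁ = atgt a₂ → a₁ = a₂ :=
    fun a₁ h₁ a₂ h₂ h => Multiset.inj_on_of_nodup_map hnodt a₁ h₁ a₂ h₂ h
  have hinjKs : ∀ a₁ ∈ K, ∀ a₂ ∈ K, asrc a₁ = asrc a₂ → a₁ = a₂ :=
    fun a₁ h₁ a₂ h₂ h => Multiset.inj_on_of_nodup_map hnods a₁ h₁ a₂ h₂ h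
  set pickK : Fin n → Arc d n := fun v =>
    if h : ∃ a ∈ K, asrc a = v then h.choose else (v, v, 0) with hpickK
  have hpickspec : ∀ v, (∃ a ∈ K, asrc a = v) → pickK v ∈ K ∧ asrc (pickK v) = v := by
    intro v h
    rw [hpickK]
    dsimp only
    rw [dif_pos h]
    exact ⟨h.choose_spec.1, h.choose_spec.2⟩
  set g : Fin n → Fin n := fun v =>
    if ∃ a ∈ K, asrc a = v then atgt (pickK v) else v with hg
  have hginj : Function.Injective g := by
    intro u v huv
    rw [hg] at huv
    dsimp only at huv
    by_cases hu : ∃ a ∈ K, asrc a = u <;> by_cases hv : ∃ a ∈ K, asrc a = v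
    · rw [if_pos hu, if_pos hv] at huv
      have h1 := hpickspec u hu
      have h2 := hpickspec v hv
      have := hinjKt _ h1.1 _ h2.1 huv
      rw [← h1.2, ← h2.2, this]
    · rw [if_pos hu, if_neg hv] at huv
      exfalso
      apply hv
      have h1 := hpickspec u hu
      have hmem : atgt (pickK u) ∈ K.image atgt := Finset.mem_image_of_mem _ h1.1
      rw [← himg, Finset.mem_image] at hmem
      obtain ⟨a, ha, haeq⟩ := hmem
      exact ⟨a, ha, by rw [haeq, huv]⟩
    · rw [if_neg hu, if_pos hv] at huv
      exfalso
      apply hu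
      have h2 := hpickspec v hv
      have hmem : atgt (pickK v) ∈ K.image atgt := Finset.mem_image_of_mem _ h2.1
      rw [← himg, Finset.mem_image] at hmem
      obtain ⟨a, ha, haeq⟩ := hmem
      exact ⟨a, ha, by rw [haeq, ← huv]⟩
    · rw [if_neg hu, if_neg hv] at huv
      exact huv
  set σ : Equiv.Perm (Fin n) := Equiv.ofBijective g (Finite.injective_iff_bijective.mp hginj)
    with hσ
  have hσapp : ∀ v, σ v = g v := fun v => rfl
  set c : Fin n → Option (Option (Fin d → ℤ)) := fun v =>
    if ∃ a ∈ K, asrc a = v then some (some ((pickK v).2.2)) else some none with hcdef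
  have hccfg : (⟨σ, c⟩ : (_ : Equiv.Perm (Fin n)) ×
      (Fin n → Option (Option (Fin d → ℤ)))) ∈ G.cfgs := by
    rw [mem_cfgs]
    intro i
    show c i ∈ G.opts (σ i) i
    by_cases h : ∃ a ∈ K, asrc a = i
    · rw [hcdef]
      dsimp only
      rw [if_pos h, mem_opts_some_some]
      have h1 := hpickspec i h
      have hv := hval _ h1.1
      have hσi : σ i = (pickK i).2.1 := by
        rw [hσapp, hg]
        dsimp only
        rw [if_pos h]
        rfl
      rw [hσi]
      have hv' : (pickK i).2.2 ∈ G.edges (pickK i).2.1 (asrc (pickK i)) := hv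
      rw [h1.2] at hv'
      exact hv' 
    · rw [hcdef]
      dsimp only
      rw [if_neg h]
      have hσi : σ i = i := by
        rw [hσapp, hg]
        dsimp only
        rw [if_neg h]
      rw [hσi]
      exact (G.mem_opts_some_none).mpr rfl
  refine ⟨⟨σ, c⟩, hccfg, ?_, ?_⟩
  · rw [bOf]
    apply Finset.sum_eq_zero
    intro v _
    rw [hcdef]
    dsimp only
    split_ifs <;> rfl
  · have hzv : ∀ v, zO (c v) = if v ∈ K.image asrc then (pickK v).2.2 else 0 := by
      intro v
      rw [hcdef]
      dsimp only
      by_cases h : ∃ a ∈ K, asrc a = v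
      · rw [if_pos h, if_pos (Finset.mem_image.mpr (by
          obtain ⟨a, ha, haeq⟩ := h
          exact ⟨a, ha, haeq⟩))]
        rfl
      · rw [if_neg h, if_neg (by
          intro hmem
          rw [Finset.mem_image] at hmem
          exact h hmem)]
        rfl
    have hswap : (∑ j, w1 j * zOf c j) = ∑ v ∈ Finset.univ, ∑ j, w1 j * zO (c v) j := by
      rw [Finset.sum_comm]
      refine Finset.sum_congr rfl (fun j _ => ?_)
      rw [zOf, Finset.sum_apply, Finset.mul_sum]
    rw [hswap]
    have hrestrict : ∑ v ∈ Finset.univ, ∑ j, w1 j * zO (c v) j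
        = ∑ v ∈ K.image asrc, ∑ j, w1 j * zO (c v) j := by
      symm
      apply Finset.sum_subset (Finset.subset_univ _)
      intro v _ hv
      apply Finset.sum_eq_zero
      intro j _
      rw [hzv v, if_neg hv]
      simp
    rw [hrestrict]
    have hbij : ∑ v ∈ K.image asrc, ∑ j, w1 j * zO (c v) j = ∑ a ∈ K, wArc w1 a := by
      refine Finset.sum_bij (fun v hv => pickK v) ?_ ?_ ?_ ?_
      · intro v hv
        rw [Finset.mem_image] at hv
        obtain ⟨a, ha, haeq⟩ := hv
        exact (hpickspec v ⟨a, ha, haeq⟩).1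
      · intro v₁ hv₁ v₂ hv₂ heq
        have heq' : pickK v₁ = pickK v₂ := heq
        rw [Finset.mem_image] at hv₁ hv₂
        obtain ⟨a₁, ha₁, he₁⟩ := hv₁
        obtain ⟨a₂, ha₂, he₂⟩ := hv₂
        have h1 := hpickspec v₁ ⟨a₁, ha₁, he₁⟩
        have h2 := hpickspec v₂ ⟨a₂, ha₂, he₂⟩
        rw [← h1.2, ← h2.2, heq']
      · intro a ha
        refine ⟨asrc a, Finset.mem_image_of_mem _ ha, ?_⟩
        show pickK (asrc a) = a
        have h1 := hpickspec (asrc a) ⟨a, ha, rfl⟩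
        exact hinjKs _ h1.1 _ ha h1.2
      · intro v hv
        show _ = wArc w1 (pickK v)
        have h1 : v ∈ K.image asrc := hv
        rw [wArc]
        refine Finset.sum_congr rfl (fun j _ => ?_)
        rw [hzv v, if_pos h1]
    rw [hbij]
    rfl

end Connect

section Symmetry

variable (G : PeriodicGraph d n)

lemma neg_mem_fullSupp {p : (Fin d → ℤ) × ℕ × (G.VarIdx →₀ ℕ)}
    (hp : p ∈ fullSupp G.dispU) :
    ((-p.1, p.2.1, p.2.2) : (Fin d → ℤ) × ℕ × (G.VarIdx →₀ ℕ)) ∈ fullSupp G.dispU := by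
  classical
  obtain ⟨x, hx, hb, hz, hm⟩ := G.exists_cfg_of_mem_fullSupp hp
  obtain ⟨σ, c⟩ := x
  have hc : ∀ i, c i ∈ G.opts (σ i) i := G.mem_cfgs.mp hx
  set c' : Fin n → Option (Option (Fin d → ℤ)) := fun j =>
    Option.map (Option.map Neg.neg) (c (σ⁻¹ j)) with hc'
  have happ : ∀ i : Fin n, σ⁻¹ (σ i) = i := fun i => σ.symm_apply_apply i
  have happ2 : ∀ j : Fin n, σ (σ⁻¹ j) = j := fun j => σ.apply_symm_apply j
  -- validity
  have hvalid : ∀ j, c' j ∈ G.opts (σ⁻¹ j) j := by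
    intro j
    rw [hc']
    dsimp only
    match hcv : c (σ⁻¹ j) with
    | none =>
        have hfix : σ (σ⁻¹ j) = σ⁻¹ j := G.mem_opts_none.mp (hcv ▸ hc (σ⁻¹ j))
        have hj : σ⁻¹ j = j := by
          conv_lhs => rw [← hfix]
          exact happ2 j
        show (none : Option (Option (Fin d → ℤ))) ∈ _
        exact G.mem_opts_none.mpr hj
    | some none =>
        have hfix : σ (σ⁻¹ j) = σ⁻¹ j := G.mem_opts_some_none.mp (hcv ▸ hc (σ⁻¹ j))
        have hj : σ⁻¹ j = j := by
          conv_lhs => rw [← hfix]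
          exact happ2 j
        show some (none : Option (Fin d → ℤ)) ∈ _
        exact G.mem_opts_some_none.mpr hj
    | some (some a) =>
        have ha : a ∈ G.edges (σ (σ⁻¹ j)) (σ⁻¹ j) := G.mem_opts_some_some.mp (hcv ▸ hc (σ⁻¹ j))
        rw [happ2 j] at ha
        show some (some (-a)) ∈ _
        rw [mem_opts_some_some]
        exact (G.symm j (σ⁻¹ j) a).mp ha
  have hcfg' : (⟨σ⁻¹, c'⟩ : (_ : Equiv.Perm (Fin n)) ×
      (Fin n → Option (Option (Fin d → ℤ)))) ∈ G.cfgs := G.mem_cfgs.mpr hvalid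
  -- data
  have hbO : ∀ o : Option (Option (Fin d → ℤ)), bO (Option.map (Option.map Neg.neg) o) = bO o := by
    intro o
    match o with
    | none => rfl
    | some none => rfl
    | some (some a) => rfl
  have hzO : ∀ o : Option (Option (Fin d → ℤ)),
      zO (Option.map (Option.map Neg.neg) o) = -(zO o) := by
    intro o
    match o with
    | none => show (0 : Fin d → ℤ) = -0; rw [neg_zero]
    | some none => show (0 : Fin d → ℤ) = -0; rw [neg_zero]
    | some (some a) => rfl
  have hbOf : bOf c' = bOf c := by
    rw [bOf, bOf, ← Equiv.sum_comp σ (fun j => bO (c' j))]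
    refine Finset.sum_congr rfl (fun i _ => ?_)
    rw [hc']
    dsimp only
    rw [happ i, hbO]
  have hzOf : zOf c' = -(zOf c) := by
    rw [zOf, zOf, ← Equiv.sum_comp σ (fun j => zO (c' j)), ← Finset.sum_neg_distrib]
    refine Finset.sum_congr rfl (fun i _ => ?_)
    rw [hc']
    dsimp only
    rw [happ i, hzO]
  have hmOf : G.mOf σ⁻¹ c' = G.mOf σ c := by
    rw [mOf, mOf, ← Equiv.sum_comp σ (fun j => G.mO (σ⁻¹ j) j (c' j))]
    refine Finset.sum_congr rfl (fun i _ => ?_)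
    rw [hc']
    dsimp only
    rw [happ i]
    match hcv : c i with
    | none => rfl
    | some none =>
        have hfix : σ i = i := G.mem_opts_some_none.mp (hcv ▸ hc i)
        show G.mO i (σ i) (some none) = G.mO (σ i) i (some none)
        rw [hfix]
    | some (some a) =>
        have ha : a ∈ G.edges (σ i) i := G.mem_opts_some_some.mp (hcv ▸ hc i)
        have ha' : -a ∈ G.edges i (σ i) := (G.symm (σ i) i a).mp ha
        show G.mO i (σ i) (some (some (-a))) = G.mO (σ i) i (some (some a))
        rw [G.mO_some_some i (σ i) (-a) ha', G.mO_some_some (σ i) i a ha]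
        congr 1
        rw [edgeVar, edgeVar]
        congr 1
        apply Quotient.sound
        right
        apply Subtype.ext
        simp [flipEdge]
  have hres := G.cfg_mem_fullSupp hcfg'
  have e1 : zOf c' = -p.1 := by rw [hzOf, hz]
  have e2 : bOf c' = p.2.1 := by rw [hbOf, hb]
  have e3 : G.mOf σ⁻¹ c' = p.2.2 := by rw [hmOf, hm]
  rw [e1, e2, e3] at hres
  exact hres

end Symmetry




end PeriodicGraph

open PeriodicGraph in
/-- If `w` identifies a proper vertical face `F = N_w` of
the generic Newton polytope `N = N(D(z,λ))`, then there is a vertex `i ∈ [n]`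
such that the facial polynomial `D_w(z,λ)` is independent of the potential
variable `v_i`: every monomial of `D(v,e,z,λ)` whose `(z,λ)`-exponent vector
minimizes `w · ·` over the generic support has `v_i`-degree `0`. -/
theorem facial_independent_of_some_potential {d n : ℕ} (G : PeriodicGraph d n)
    (w : (Fin d → ℤ) × ℤ)
    (hproper : face G.dispU w ≠ newton G.dispU)
    (hvert : IsVertical (face G.dispU w)) :
    ∃ i : Fin n, ∀ r ∈ fullSupp G.dispU,
      (∀ q ∈ genSupp G.dispU, dotZ w (r.1, r.2.1) ≤ dotZ w q) →
      r.2.2 (Sum.inl i) = 0 := by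
  classical
  -- Step 1: the weight has vanishing λ-component since the face is vertical.
  obtain ⟨av, bv, cv, hbc, hv1, hv2⟩ := hvert
  have hw2 : w.2 = 0 := by
    have h1 := hv1.2 _ hv2.1
    have h2 := hv2.2 _ hv1.1
    have heq : dotR w (av, bv) = dotR w (av, cv) := le_antisymm h1 h2
    rw [dotR, dotR] at heq
    have hbc' : (w.2 : ℝ) * bv = w.2 * cv := by dsimp at heq; linarith
    have hw2' : (w.2 : ℝ) = 0 := by
      by_contra hne
      exact hbc (mul_left_cancel₀ hne hbc')
    exact_mod_cast hw2'
  -- Step 2: the support is nonempty, pick a minimal point.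
  have hne : (genSuppFinset G.dispU).Nonempty := by
    rw [Finset.nonempty_iff_ne_empty]
    intro h
    apply hproper
    have hgen : genSupp G.dispU = ∅ := by
      ext p
      constructor
      · intro hp
        have := (mem_genSuppFinset G.dispU p).mpr hp
        rw [h] at this
        exact absurd this (Finset.notMem_empty p)
      · intro hp
        exact absurd hp (Set.notMem_empty p)
    have hnewt : newton G.dispU = ∅ := by
      rw [newton, hgen, Set.image_empty, convexHull_empty]
    rw [hnewt]
    ext q
    constructor
    · intro hq
      exact (hnewt ▸ hq.1)
    · intro hq
      exact absurd hq (Set.notMem_empty q)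
  obtain ⟨p₀, hp₀mem, hp₀min⟩ := Finset.exists_min_image (genSuppFinset G.dispU) (dotZ w) hne
  have hp₀ : p₀ ∈ genSupp G.dispU := (mem_genSuppFinset _ _).mp hp₀mem
  set m : ℤ := dotZ w p₀ with hm
  have hmin : ∀ p ∈ genSupp G.dispU, m ≤ dotZ w p :=
    fun p hp => hp₀min p ((mem_genSuppFinset _ _).mpr hp)
  -- Step 3: properness gives a strictly larger point.
  have hstrict : ∃ q ∈ genSupp G.dispU, m < dotZ w q := by
    by_contra h
    push_neg at h
    exact hproper (face_eq_newton_of_const w m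
      (fun p hp => le_antisymm (h p hp) (hmin p hp)))
  obtain ⟨q₀, hq₀, hq₀m⟩ := hstrict
  -- Step 4: symmetry gives m < 0.
  have hdotneg : ∀ (a : Fin d → ℤ) (b : ℕ), dotZ w (-a, b) = - dotZ w (a, b) := by
    intro a b
    rw [dotZ, dotZ, hw2]
    simp only [Pi.neg_apply, mul_neg, Int.cast_zero, zero_mul, add_zero]
    rw [Finset.sum_neg_distrib]
  have hsym : ((-q₀.1, q₀.2) : (Fin d → ℤ) × ℕ) ∈ genSupp G.dispU := by
    obtain ⟨μ, hμ⟩ := (G.genSupp_eq_exists_fullSupp q₀).mp hq₀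
    exact (G.genSupp_eq_exists_fullSupp _).mpr ⟨μ, G.neg_mem_fullSupp hμ⟩
  have hmneg : m < 0 := by
    have h1 : m ≤ dotZ w (-q₀.1, q₀.2) := hmin _ hsym
    rw [hdotneg q₀.1 q₀.2] at h1
    have : dotZ w (q₀.1, q₀.2) = dotZ w q₀ := rfl
    rw [this] at h1
    linarith
  -- Step 5: rule out n = 0.
  rcases Nat.eq_zero_or_pos n with hn0 | hn
  · exfalso
    obtain ⟨μ₀, hμ₀⟩ := (G.genSupp_eq_exists_fullSupp p₀).mp hp₀
    obtain ⟨x, hx, hb, hz, -⟩ := G.exists_cfg_of_mem_fullSupp hμ₀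
    subst hn0
    have hz0 : zOf x.2 = 0 := by
      rw [zOf]
      simp
    have hb0 : bOf x.2 = 0 := by
      rw [bOf]
      simp
    have hz1 : zOf x.2 = p₀.1 := hz
    have hb1 : bOf x.2 = p₀.2 := hb
    have e1 : p₀.1 = 0 := by rw [← hz1, hz0]
    have e2 : p₀.2 = 0 := by rw [← hb1, hb0]
    have hdz0 : dotZ w p₀ = 0 := by
      have : p₀ = (p₀.1, p₀.2) := rfl
      rw [dotZ, e1, e2]
      simp
    rw [hm, hdz0] at hmneg
    exact absurd hmneg (lt_irrefl 0)
  -- Step 6: the main contradiction.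
  by_contra hgoal
  push_neg at hgoal
  have hKex : ∀ i : Fin n, ∃ K : Finset (Arc d n), IsCover K ∧ (∀ a ∈ K, G.ArcValid a) ∧
      wMul w.1 K.val = m ∧ srcC K.val i = 0 := by
    intro i
    obtain ⟨r, hr, hrmin, hri⟩ := hgoal i
    have hrgen : (r.1, r.2.1) ∈ genSupp G.dispU :=
      (G.genSupp_eq_exists_fullSupp _).mpr ⟨r.2.2, hr⟩
    have hrm : dotZ w (r.1, r.2.1) = m := le_antisymm (hrmin p₀ hp₀) (hmin _ hrgen)
    obtain ⟨x, hx, hb, hz, hmOfx⟩ := G.exists_cfg_of_mem_fullSupp hr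
    obtain ⟨K, hcov, hvalid, hweight, hsrc0⟩ := G.cover_of_cfg w.1 hx
    refine ⟨K, hcov, hvalid, ?_, ?_⟩
    · rw [hweight, hz]
      rw [dotZ, hw2] at hrm
      simpa using hrm
    · exact hsrc0 i (G.mOf_inl i (by rw [hmOfx]; exact hri))
  choose Ks hKcov hKval hKw hKi using hKex
  set i₀ : Fin n := ⟨0, hn⟩ with hi₀
  set M : Multiset (Arc d n) := (Ks i₀).val + ∑ i ∈ Finset.univ, (Ks i).val with hM
  have hMbal : Bal M := by
    intro v
    rw [hM, srcC_add, tgtC_add, srcC_sum, tgtC_sum, isCover_bal (hKcov i₀) v]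
    congr 1
    exact Finset.sum_congr rfl (fun i _ => isCover_bal (hKcov i) v)
  have hsrcle : ∀ i v, srcC (Ks i).val v ≤ 1 := by
    intro i v
    rw [srcC]
    exact Multiset.nodup_iff_count_le_one.mp (hKcov i).1 v
  have hMdeg : ∀ v, srcC M v ≤ n := by
    intro v
    rw [hM, srcC_add, srcC_sum]
    have h2 : ∑ i ∈ Finset.univ, srcC (Ks i).val v ≤ n - 1 := by
      rw [← Finset.add_sum_erase _ _ (Finset.mem_univ v), hKi v, zero_add]
      calc ∑ i ∈ Finset.univ.erase v, srcC (Ks i).val v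
          ≤ ∑ _i ∈ Finset.univ.erase v, 1 := Finset.sum_le_sum (fun i _ => hsrcle i v)
        _ = (Finset.univ.erase v).card := by simp
        _ = n - 1 := by
            rw [Finset.card_erase_of_mem (Finset.mem_univ v), Finset.card_univ,
              Fintype.card_fin]
    have h1 := hsrcle i₀ v
    omega
  have hMw : wMul w.1 M = ((n : ℤ) + 1) * m := by
    rw [hM, wMul_add, wMul_sum, hKw i₀,
      Finset.sum_congr rfl (fun i _ => hKw i), Finset.sum_const, Finset.card_univ,
      Fintype.card_fin, nsmul_eq_mul]
    ring
  obtain ⟨K, hKcov', hKmem, hKw'⟩ := exists_cover_avg w.1 n M hMbal hMdeg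
  have hKvalid' : ∀ a ∈ K, G.ArcValid a := by
    intro a ha
    have haM := hKmem a ha
    rw [hM, Multiset.mem_add] at haM
    rcases haM with h | h
    · exact hKval i₀ a h
    · rw [Multiset.mem_sum] at h
      obtain ⟨i, -, hi⟩ := h
      exact hKval i a hi
  obtain ⟨x', hx', hb', hz'⟩ := G.cfg_of_cover w.1 K hKcov' hKvalid'
  have hfull := G.cfg_mem_fullSupp hx'
  have hgen' : (zOf x'.2, bOf x'.2) ∈ genSupp G.dispU :=
    (G.genSupp_eq_exists_fullSupp _).mpr ⟨_, hfull⟩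
  have hge := hmin _ hgen'
  have hdz : dotZ w (zOf x'.2, bOf x'.2) = wMul w.1 K.val := by
    rw [dotZ, hb']
    push_cast
    rw [mul_zero, add_zero]
    exact hz'
  rw [hdz] at hge
  have h1 : (n : ℤ) * wMul w.1 K.val ≤ ((n : ℤ) + 1) * m := by
    rw [← hMw]
    exact hKw'
  have h3 : (n : ℤ) * m ≤ (n : ℤ) * wMul w.1 K.val :=
    mul_le_mul_of_nonneg_left hge (by positivity)
  linarith
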